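/- arXiv:1305.6957 — 4 statements merged into one kernel-verified Lean document; each statement's English description precedes it below -/
import Mathlib

section
/- For every integer n ≥ 1, the open Waring rank of quadratic forms satisfies Ork(n, 2) = n. -/
open MvPolynomial

noncomputable section WaringSetup

variable {k : Type} [Field k] {n : ℕ}

/-- The linear form `∑ aᵢ xᵢ` with coefficient vector `a`. -/
def linForm (a : Fin n → k) : MvPolynomial (Fin n) k :=
  ∑ i, C (a i) * X i

/-- A subset of the space `S₁` of linear forms (identified with the space of coefficient
vectors) is homogeneous Zariski closed if it is the common zero locus of a set of
homogeneous polynomial functions. -/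
def HomZariskiClosed (V : Set (Fin n → k)) : Prop :=
  ∃ P : Set (MvPolynomial (Fin n) k),
    (∀ p ∈ P, ∃ e : ℕ, p.IsHomogeneous e) ∧
    V = {a | ∀ p ∈ P, eval a p = 0}

/-- `F` can be written as a polynomial in `m` linear forms. -/
def WritableIn (m : ℕ) (F : MvPolynomial (Fin n) k) : Prop :=
  ∃ y : Fin m → MvPolynomial (Fin n) k,
    (∀ j, (y j).IsHomogeneous 1) ∧ ∃ G : MvPolynomial (Fin m) k, F = aeval y G

/-- `F` essentially depends on `n` variables: after any linear change of coordinates it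
cannot be written using fewer than `n` variables. -/
def EssDep (F : MvPolynomial (Fin n) k) : Prop :=
  ∀ m : ℕ, m < n → ¬ WritableIn m F

/-- `OrkV d F V` is the minimal number `m` such that `F` is a sum of `m` `d`-th powers of
linear forms lying outside `V` (and `⊤` if there is no such presentation). -/
def OrkV (d : ℕ) (F : MvPolynomial (Fin n) k) (V : Set (Fin n → k)) : ℕ∞ :=
  sInf ((fun m : ℕ => (m : ℕ∞)) ''
    {m : ℕ | ∃ l : Fin m → (Fin n → k), (∀ i, l i ∉ V) ∧ F = ∑ i, linForm (l i) ^ d})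

/-- The open Waring rank of a form `F`: the supremum of `OrkV d F V` over all homogeneous
Zariski-closed proper subsets `V ⊊ S₁`. -/
def Ork (d : ℕ) (F : MvPolynomial (Fin n) k) : ℕ∞ :=
  ⨆ V : {V : Set (Fin n → k) // HomZariskiClosed V ∧ V ≠ Set.univ}, OrkV d F V.1

/-- The open Waring rank `Ork(n, d)`: the supremum of `Ork F` over all forms `F` of degree
`d` essentially depending on `n` variables. -/
def OrkND (k : Type) [Field k] (n d : ℕ) : ℕ∞ :=
  ⨆ F : {F : MvPolynomial (Fin n) k // F.IsHomogeneous d ∧ EssDep F}, Ork d F.1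

/-- Apply the constant-coefficient differential operator `D` (a polynomial, whose variable
`i` is read as `∂/∂xᵢ`) to the polynomial `F`. -/
def contract (D F : MvPolynomial (Fin n) k) : MvPolynomial (Fin n) k :=
  ∑ s ∈ D.support, D.coeff s •
    ((List.finRange n).foldr (fun i G => (fun H => pderiv i H)^[s i] G) F)

/-- Polynomial functions on the affine space of polynomials: the subalgebra of functions
generated by the coefficient functionals. -/
def PolyFun (n : ℕ) (k : Type) [Field k] : Subalgebra k (MvPolynomial (Fin n) k → k) :=
  Algebra.adjoin k (Set.range fun s : Fin n →₀ ℕ => fun F => coeff s F)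

section Aux
variable {k : Type} [Field k] {n m : ℕ}

lemma eval_linForm (a l : Fin n → k) : eval a (linForm l) = ∑ i, l i * a i := by
  simp [linForm]

lemma eval_aeval'' (a : Fin n → k) (y : Fin m → MvPolynomial (Fin n) k)
    (G : MvPolynomial (Fin m) k) :
    eval a (aeval y G) = eval (fun j => eval a (y j)) G := by
  induction G using MvPolynomial.induction_on with
  | C c => simp
  | add p q hp hq => rw [map_add, map_add, hp, hq, map_add]
  | mul_X p i hp => rw [map_mul, map_mul, hp, aeval_X, map_mul, eval_X]


lemma homog_eval_smul {p : MvPolynomial (Fin n) k} {e : ℕ}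
    (hp : p.IsHomogeneous e) (c : k) (x : Fin n → k) :
    eval (fun i => c * x i) p = c ^ e * eval x p := by
  rw [eval_eq, eval_eq, Finset.mul_sum]
  refine Finset.sum_congr rfl fun d hd => ?_
  have hdeg : d.degree = e := by
    rw [Finsupp.degree_eq_weight_one]; exact hp (mem_support_iff.mp hd)
  have : ∏ i ∈ d.support, (c * x i) ^ d i
      = (∏ i ∈ d.support, c ^ d i) * ∏ i ∈ d.support, x i ^ d i := by
    rw [← Finset.prod_mul_distrib]
    exact Finset.prod_congr rfl fun i _ => mul_pow _ _ _
  rw [this, Finset.prod_pow_eq_pow_sum]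
  have : ∑ i ∈ d.support, d i = e := hdeg
  rw [this]; ring

lemma degree_eq_sum_univ (d : Fin n →₀ ℕ) : d.degree = ∑ i, d i := by
  rw [Finsupp.degree]
  exact Finset.sum_subset (Finset.subset_univ _) (fun i _ hi => by
    simpa using Finsupp.notMem_support_iff.mp hi)

lemma degree_single' (i : Fin n) (m : ℕ) : (Finsupp.single i m).degree = m := by
  rw [degree_eq_sum_univ]
  simp [Finsupp.single_apply]

lemma degree_one_classify {d : Fin n →₀ ℕ} (hd : d.degree = 1) :
    ∃ i, d = Finsupp.single i 1 := by
  rw [degree_eq_sum_univ] at hd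
  have h1 : ∃ i, d i ≠ 0 := by
    by_contra h
    push_neg at h
    simp [h] at hd
  obtain ⟨i, hi⟩ := h1
  refine ⟨i, ?_⟩
  have hle : d i ≤ 1 := hd ▸ Finset.single_le_sum (f := fun j => d j)
    (fun j _ => Nat.zero_le _) (Finset.mem_univ i)
  have hdi : d i = 1 := le_antisymm hle (Nat.one_le_iff_ne_zero.mpr hi)
  ext j
  rcases eq_or_ne j i with rfl | hj
  · simp [hdi]
  · have : d i + ∑ t ∈ Finset.univ.erase i, d t = 1 := by
      rw [Finset.add_sum_erase _ _ (Finset.mem_univ i)]; exact hd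
    have hz : ∑ t ∈ Finset.univ.erase i, d t = 0 := by omega
    have := Finset.sum_eq_zero_iff.mp hz j (by simp [hj])
    simp [Finsupp.single_apply, Ne.symm hj, this]

lemma degree_two_classify {d : Fin n →₀ ℕ} (hd : d.degree = 2) :
    ∃ i j, d = Finsupp.single i 1 + Finsupp.single j 1 := by
  rw [degree_eq_sum_univ] at hd
  have h1 : ∃ i, d i ≠ 0 := by
    by_contra h
    push_neg at h
    simp [h] at hd
  obtain ⟨i, hi⟩ := h1
  have hsplit : d i + ∑ t ∈ Finset.univ.erase i, d t = 2 := by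
    rw [Finset.add_sum_erase _ _ (Finset.mem_univ i)]; exact hd
  rcases Nat.lt_or_ge (d i) 2 with h2 | h2
  · -- d i = 1, rest sums to 1
    have hdi : d i = 1 := by omega
    have hrest : ∑ t ∈ Finset.univ.erase i, d t = 1 := by omega
    -- the erased finsupp
    have herase : (d.erase i).degree = 1 := by
      rw [degree_eq_sum_univ]
      rw [← hrest]
      rw [← Finset.add_sum_erase _ (fun t => (d.erase i) t) (Finset.mem_univ i)]
      simp only [Finsupp.erase_same, zero_add]
      exact Finset.sum_congr rfl fun t ht => Finsupp.erase_ne (Finset.ne_of_mem_erase ht)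
    obtain ⟨j, hj⟩ := degree_one_classify herase
    have hji : j ≠ i := by
      intro h
      subst h
      have := Finsupp.erase_same (a := j) (f := d)
      rw [hj] at this
      simp at this
    refine ⟨i, j, ?_⟩
    ext t
    rcases eq_or_ne t i with rfl | ht
    · simp [hdi, Finsupp.single_apply, hji]
    · have : (d.erase i) t = d t := Finsupp.erase_ne ht
      rw [← this, hj]
      simp [Finsupp.single_apply, Ne.symm ht]
  · -- d i = 2, all else 0
    have hdi : d i = 2 := by
      have hle : d i ≤ 2 := by omega
      omega
    have hrest : ∑ t ∈ Finset.univ.erase i, d t = 0 := by omega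
    refine ⟨i, i, ?_⟩
    ext t
    rcases eq_or_ne t i with rfl | ht
    · simp [hdi]
    · have := Finset.sum_eq_zero_iff.mp hrest t (by simp [ht])
      simp [Finsupp.single_apply, Ne.symm ht, this]


lemma linForm_isHomogeneous (l : Fin n → k) : (linForm l).IsHomogeneous 1 :=
  IsHomogeneous.sum _ _ _ fun i _ => by
    simpa using (isHomogeneous_C (Fin n) (l i)).mul (isHomogeneous_X k i)

lemma homog1_structure {p : MvPolynomial (Fin n) k} (hp : p.IsHomogeneous 1) :
    p = linForm (fun i => coeff (Finsupp.single i 1) p) := by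
  have hlf : linForm (fun i => coeff (Finsupp.single i 1) p)
      = ∑ i, monomial (Finsupp.single i 1) (coeff (Finsupp.single i 1) p) := by
    unfold linForm
    exact Finset.sum_congr rfl fun i _ => C_mul_X_eq_monomial
  rw [hlf]
  ext d
  rw [coeff_sum]
  by_cases hd : d.degree = 1
  · obtain ⟨i0, rfl⟩ := degree_one_classify hd
    rw [Finset.sum_eq_single i0]
    · simp [coeff_monomial]
    · intro i _ hi
      rw [coeff_monomial, if_neg]
      intro h
      exact hi (by
        have := (Finsupp.single_left_inj (one_ne_zero)).mp h
        exact this)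
    · intro h; exact absurd (Finset.mem_univ i0) h
  · rw [hp.coeff_eq_zero hd, Finset.sum_eq_zero]
    intro i _
    rw [coeff_monomial, if_neg]
    intro h
    exact hd (by rw [← h, degree_single'])

/-- The coefficient matrix of a quadratic form. -/
def Mc (F : MvPolynomial (Fin n) k) (i j : Fin n) : k :=
  if i = j then coeff (Finsupp.single i 2) F
  else coeff (Finsupp.single i 1 + Finsupp.single j 1) F / 2

lemma Mc_symm (F : MvPolynomial (Fin n) k) (i j : Fin n) : Mc F i j = Mc F j i := by
  unfold Mc
  rcases eq_or_ne i j with rfl | hij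
  · rfl
  · rw [if_neg hij, if_neg (Ne.symm hij), add_comm]

lemma single_add_single_eq {i j i' j' : Fin n}
    (h : Finsupp.single i' 1 + Finsupp.single j' 1
        = Finsupp.single i 1 + Finsupp.single j 1) :
    (i' = i ∧ j' = j) ∨ (i' = j ∧ j' = i) := by
  have happ : ∀ t, Finsupp.single i' 1 t + Finsupp.single j' 1 t
      = Finsupp.single i 1 t + Finsupp.single j 1 t := by
    intro t
    have := DFunLike.congr_fun h t
    simpa using this
  have hi' : i' = i ∨ i' = j := by
    by_contra hc
    push_neg at hc
    have := happ i'
    simp [Finsupp.single_apply, Ne.symm hc.1, Ne.symm hc.2] at this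
  rcases hi' with rfl | rfl
  · left
    refine ⟨rfl, ?_⟩
    have : Finsupp.single j' 1 = Finsupp.single j (1:ℕ) := by
      have := add_left_cancel h
      exact this
    exact (Finsupp.single_left_inj one_ne_zero).mp this
  · right
    refine ⟨rfl, ?_⟩
    rw [add_comm (Finsupp.single i 1)] at h
    have : Finsupp.single j' 1 = Finsupp.single i (1:ℕ) := add_left_cancel h
    exact (Finsupp.single_left_inj one_ne_zero).mp this

lemma quadratic_structure [CharZero k] {F : MvPolynomial (Fin n) k} (hF : F.IsHomogeneous 2) :
    F = ∑ i, ∑ j, monomial (Finsupp.single i 1 + Finsupp.single j 1) (Mc F i j) := by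
  have h2 : (2:k) ≠ 0 := two_ne_zero
  ext d
  rw [coeff_sum]
  simp_rw [coeff_sum, coeff_monomial]
  by_cases hd : d.degree = 2
  · obtain ⟨i, j, rfl⟩ := degree_two_classify hd
    rcases eq_or_ne i j with rfl | hij
    · -- diagonal
      rw [Finset.sum_eq_single i]
      · rw [Finset.sum_eq_single i]
        · rw [if_pos rfl]
          unfold Mc
          rw [if_pos rfl]
          congr 1
          ext t
          simp [Finsupp.single_apply]
          split <;> omega
        · intro b _ hb
          rw [if_neg]
          intro h
          rcases single_add_single_eq h with ⟨_, h2⟩ | ⟨h1, _⟩ <;> exact hb (by assumption)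
        · intro h; exact absurd (Finset.mem_univ i) h
      · intro a _ ha
        rw [Finset.sum_eq_zero]
        intro b _
        rw [if_neg]
        intro h
        rcases single_add_single_eq h with ⟨h1, _⟩ | ⟨h1, _⟩ <;> exact ha h1
      · intro h; exact absurd (Finset.mem_univ i) h
    · -- off-diagonal: matches at (i,j) and (j,i)
      have key : ∀ a : Fin n, (∑ b, if Finsupp.single a 1 + Finsupp.single b 1
            = Finsupp.single i 1 + Finsupp.single j 1 then Mc F a b else 0)
          = (if a = i then Mc F i j else 0) + (if a = j then Mc F j i else 0) := by
        intro a
        rcases eq_or_ne a i with rfl | hai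
        · rw [if_pos rfl, if_neg hij]
          rw [Finset.sum_eq_single j]
          · rw [if_pos rfl, add_zero]
          · intro b _ hb
            rw [if_neg]
            intro h
            rcases single_add_single_eq h with ⟨_, hb2⟩ | ⟨ha2, _⟩
            · exact hb hb2
            · exact hij ha2
          · intro h; exact absurd (Finset.mem_univ j) h
        · rcases eq_or_ne a j with rfl | haj
          · rw [if_neg hai, if_pos rfl, zero_add]
            rw [Finset.sum_eq_single i]
            · rw [if_pos (by rw [add_comm])]
            · intro b _ hb
              rw [if_neg]
              intro h
              rcases single_add_single_eq h with ⟨ha2, _⟩ | ⟨_, hb2⟩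
              · exact hai ha2
              · exact hb hb2
            · intro h; exact absurd (Finset.mem_univ i) h
          · rw [if_neg hai, if_neg haj, add_zero, Finset.sum_eq_zero]
            intro b _
            rw [if_neg]
            intro h
            rcases single_add_single_eq h with ⟨ha2, _⟩ | ⟨ha2, _⟩
            · exact hai ha2
            · exact haj ha2
      rw [Finset.sum_congr rfl fun a _ => key a]
      rw [Finset.sum_add_distrib, Finset.sum_ite_eq' Finset.univ i, Finset.sum_ite_eq' Finset.univ j]
      simp only [Finset.mem_univ, if_true]
      unfold Mc
      rw [if_neg hij, if_neg (Ne.symm hij)]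
      rw [add_comm (Finsupp.single j 1) (Finsupp.single i 1)]
      field_simp
      ring
  · rw [hF.coeff_eq_zero hd, Finset.sum_eq_zero]
    intro a _
    rw [Finset.sum_eq_zero]
    intro b _
    rw [if_neg]
    intro h
    apply hd
    rw [← h, degree_eq_sum_univ]
    simp [Finsupp.single_apply]
    rw [Finset.sum_add_distrib]
    simp [Finset.sum_ite_eq' Finset.univ a, Finset.sum_ite_eq' Finset.univ b]

lemma monomial_pair_eq (i j : Fin n) (c : k) :
    (monomial (Finsupp.single i 1 + Finsupp.single j 1)) c = C c * X i * X j := by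
  rw [eq_comm, C_mul_X_eq_monomial, ← pow_one (X j : MvPolynomial (Fin n) k),
    X_pow_eq_monomial, monomial_mul, mul_one]

lemma quadratic_eval [CharZero k] {F : MvPolynomial (Fin n) k} (hF : F.IsHomogeneous 2)
    (a : Fin n → k) :
    eval a F = ∑ i, ∑ j, Mc F i j * a i * a j := by
  conv_lhs => rw [quadratic_structure hF]
  rw [map_sum]
  refine Finset.sum_congr rfl fun i _ => ?_
  rw [map_sum]
  refine Finset.sum_congr rfl fun j _ => ?_
  rw [monomial_pair_eq]
  simp [mul_assoc]


lemma writable_of_null [CharZero k] {F : MvPolynomial (Fin n) k} (hF : F.IsHomogeneous 2)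
    (v : Fin n → k) (hv : ∃ i, v i ≠ 0)
    (hnull : ∀ j, ∑ i, Mc F i j * v i = 0) : WritableIn (n-1) F := by
  obtain ⟨i0, hi0⟩ := hv
  have hi0n : (i0 : ℕ) < n := i0.isLt
  set e : Fin (n-1) → Fin n := fun j =>
    if h : (j:ℕ) < (i0:ℕ) then ⟨j, by omega⟩
    else ⟨(j:ℕ)+1, by have := j.isLt; omega⟩ with he_def
  have he : ∀ j, e j ≠ i0 := by
    intro j
    rw [he_def]
    dsimp only
    split_ifs with h
    · exact Fin.ne_of_val_ne (by simpa using Nat.ne_of_lt h)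
    · exact Fin.ne_of_val_ne (by simp; omega)
  set r : (i : Fin n) → i ≠ i0 → Fin (n-1) := fun i h =>
    if hlt : (i:ℕ) < (i0:ℕ) then ⟨i, by omega⟩
    else ⟨(i:ℕ)-1, by
      have hi := i.isLt
      have hne : (i:ℕ) ≠ (i0:ℕ) := fun hh => h (Fin.ext hh)
      omega⟩ with hr_def
  have heval : ∀ j : Fin (n-1), ((e j):ℕ) = if (j:ℕ) < (i0:ℕ) then (j:ℕ) else (j:ℕ)+1 := by
    intro j
    rw [he_def]
    dsimp only
    split_ifs <;> rfl
  have hrval : ∀ (i : Fin n) (h : i ≠ i0),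
      ((r i h):ℕ) = if (i:ℕ) < (i0:ℕ) then (i:ℕ) else (i:ℕ)-1 := by
    intro i h
    rw [hr_def]
    dsimp only
    split_ifs <;> rfl
  have her : ∀ (i : Fin n) (h : i ≠ i0), e (r i h) = i := by
    intro i h
    have hne : (i:ℕ) ≠ (i0:ℕ) := fun hh => h (Fin.ext hh)
    have hi := i.isLt
    apply Fin.ext
    rw [heval (r i h), hrval i h]
    split_ifs <;> omega
  set y : Fin (n-1) → MvPolynomial (Fin n) k := fun j =>
    X (e j) - C (v (e j) / v i0) * X i0 with hy_def
  have hy : ∀ j, (y j).IsHomogeneous 1 := by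
    intro j
    exact (isHomogeneous_X k (e j)).sub (by
      simpa using (isHomogeneous_C (Fin n) (v (e j) / v i0)).mul (isHomogeneous_X k i0))
  set g : Fin n → MvPolynomial (Fin (n-1)) k := fun i =>
    if h : i = i0 then 0 else X (r i h) with hg_def
  refine ⟨y, hy, aeval g F, ?_⟩
  apply MvPolynomial.funext
  intro a
  rw [eval_aeval'', eval_aeval'']
  set b : Fin n → k := fun i => if i = i0 then 0 else a i - v i / v i0 * a i0 with hb_def
  have harg : (fun i => eval (fun j => eval a (y j)) (g i)) = b := by
    funext i
    rw [hg_def, hb_def]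
    dsimp only
    by_cases h : i = i0
    · rw [dif_pos h, if_pos h, map_zero]
    · rw [dif_neg h, if_neg h, eval_X, hy_def]
      dsimp only
      rw [her i h]
      simp
  rw [harg]
  -- now show eval a F = eval b F
  rw [quadratic_eval hF, quadratic_eval hF]
  symm
  have hrow : ∀ i, ∑ j, Mc F i j * v j = 0 := by
    intro i
    rw [Finset.sum_congr rfl fun j _ => by rw [Mc_symm]]
    exact hnull i
  have key : ∀ (c : k), ∑ i, ∑ j, Mc F i j * (a i + c * v i) * (a j + c * v j)
      = ∑ i, ∑ j, Mc F i j * a i * a j := by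
    intro c
    calc ∑ i, ∑ j, Mc F i j * (a i + c*v i) * (a j + c*v j)
        = ∑ i, ∑ j, (Mc F i j * a i * a j + c * (Mc F i j * v i * a j)
            + c * (Mc F i j * a i * v j) + c^2 * (Mc F i j * v i * v j)) := by
          refine Finset.sum_congr rfl fun i _ => Finset.sum_congr rfl fun j _ => by ring
      _ = (∑ i, ∑ j, Mc F i j * a i * a j) + c * (∑ i, ∑ j, Mc F i j * v i * a j)
            + c * (∑ i, ∑ j, Mc F i j * a i * v j)
            + c^2 * (∑ i, ∑ j, Mc F i j * v i * v j) := by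
          simp [Finset.sum_add_distrib, Finset.mul_sum]
      _ = ∑ i, ∑ j, Mc F i j * a i * a j := by
          have h1 : ∑ i, ∑ j, Mc F i j * v i * a j = 0 := by
            rw [Finset.sum_comm]
            refine Finset.sum_eq_zero fun j _ => ?_
            rw [show ∑ i, Mc F i j * v i * a j = (∑ i, Mc F i j * v i) * a j from
              (Finset.sum_mul _ _ _).symm, hnull j, zero_mul]
          have h2 : ∑ i, ∑ j, Mc F i j * a i * v j = 0 := by
            refine Finset.sum_eq_zero fun i _ => ?_
            have : ∑ j, Mc F i j * a i * v j = a i * ∑ j, Mc F i j * v j := by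
              rw [Finset.mul_sum]
              exact Finset.sum_congr rfl fun j _ => by ring
            rw [this, hrow i, mul_zero]
          have h3 : ∑ i, ∑ j, Mc F i j * v i * v j = 0 := by
            rw [Finset.sum_comm]
            refine Finset.sum_eq_zero fun j _ => ?_
            rw [show ∑ i, Mc F i j * v i * v j = (∑ i, Mc F i j * v i) * v j from
              (Finset.sum_mul _ _ _).symm, hnull j, zero_mul]
          rw [h1, h2, h3]
          ring
  have hb : ∀ i, b i = a i + (-(a i0 / v i0)) * v i := by
    intro i
    rw [hb_def]
    dsimp only
    by_cases h : i = i0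
    · subst h
      rw [if_pos rfl]
      field_simp
      ring
    · rw [if_neg h]
      field_simp
      ring
  calc ∑ i, ∑ j, Mc F i j * b i * b j
      = ∑ i, ∑ j, Mc F i j * (a i + (-(a i0 / v i0)) * v i) * (a j + (-(a i0 / v i0)) * v j) := by
        refine Finset.sum_congr rfl fun i _ => Finset.sum_congr rfl fun j _ => by rw [hb i, hb j]
    _ = ∑ i, ∑ j, Mc F i j * a i * a j := key _

lemma nondeg_of_essDep [CharZero k] {F : MvPolynomial (Fin n) k}
    (hF : F.IsHomogeneous 2) (hE : EssDep F) (hn : 1 ≤ n) :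
    ∀ v : Fin n → k, (∀ j, ∑ i, Mc F i j * v i = 0) → v = 0 := by
  intro v hnull
  by_contra hv
  have hv' : ∃ i, v i ≠ 0 := by
    by_contra hc
    push_neg at hc
    exact hv (funext fun i => hc i)
  exact hE (n-1) (by omega) (writable_of_null hF v hv' hnull)


lemma exists_sq_decomp [IsAlgClosed k] [CharZero k] {F : MvPolynomial (Fin n) k}
    (hF : F.IsHomogeneous 2)
    (hnd : ∀ v : Fin n → k, (∀ j, ∑ i, Mc F i j * v i = 0) → v = 0) :
    ∃ l0 w : Fin n → (Fin n → k),
      (∀ a : Fin n → k, eval a F = ∑ t, (∑ i, l0 t i * a i)^2) ∧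
      (∀ (z : Fin n → k) (i : Fin n), ∑ t, (∑ j, w t j * z j) * l0 t i = z i) ∧
      (∀ t u : Fin n, ∑ j, w t j * l0 u j = if t = u then 1 else 0) := by
  haveI : Invertible (2:k) := invertibleOfNonzero two_ne_zero
  set B : (Fin n → k) →ₗ[k] (Fin n → k) →ₗ[k] k :=
    LinearMap.mk₂ k (fun x z => ∑ i, ∑ j, Mc F i j * x i * z j)
      (fun x x' z => by
        simp only [Pi.add_apply]
        rw [← Finset.sum_add_distrib]
        refine Finset.sum_congr rfl fun i _ => ?_
        rw [← Finset.sum_add_distrib]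
        exact Finset.sum_congr rfl fun j _ => by ring)
      (fun c x z => by
        simp only [Pi.smul_apply, smul_eq_mul]
        rw [Finset.mul_sum]
        refine Finset.sum_congr rfl fun i _ => ?_
        rw [Finset.mul_sum]
        exact Finset.sum_congr rfl fun j _ => by ring)
      (fun x z z' => by
        simp only [Pi.add_apply]
        rw [← Finset.sum_add_distrib]
        refine Finset.sum_congr rfl fun i _ => ?_
        rw [← Finset.sum_add_distrib]
        exact Finset.sum_congr rfl fun j _ => by ring)
      (fun c x z => by
        simp only [Pi.smul_apply, smul_eq_mul]
        rw [Finset.mul_sum]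
        refine Finset.sum_congr rfl fun i _ => ?_
        rw [Finset.mul_sum]
        exact Finset.sum_congr rfl fun j _ => by ring) with hB_def
  have hBval : ∀ x z, B x z = ∑ i, ∑ j, Mc F i j * x i * z j := fun x z => by
    rw [hB_def, LinearMap.mk₂_apply]
  have hsymm : B.IsSymm := by
    refine ⟨fun x z => ?_⟩
    rw [RingHom.id_apply, hBval, hBval, Finset.sum_comm]
    exact Finset.sum_congr rfl fun i _ => Finset.sum_congr rfl fun j _ => by
      rw [Mc_symm]; ring
  obtain ⟨v0, hv0⟩ := LinearMap.BilinForm.exists_orthogonal_basis hsymm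
  set v : Module.Basis (Fin n) k (Fin n → k) := v0.reindex (finCongr (Module.finrank_fin_fun k)) with hv_def
  have hortho : ∀ t u : Fin n, t ≠ u → B (v t) (v u) = 0 := by
    intro t u htu
    rw [hv_def, Module.Basis.reindex_apply, Module.Basis.reindex_apply]
    exact hv0 (fun h => htu (by
      have := congrArg (finCongr (Module.finrank_fin_fun k)) h
      simpa using this))
  -- key representation of repr
  have hrepr0 : ∀ (a : Fin n → k) (t : Fin n),
      v.repr a t = ∑ i, a i * v.repr (Pi.single i (1:k)) t := by
    intro a t
    have ha : a = ∑ i, a i • (Pi.single i 1 : Fin n → k) := by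
      funext j
      rw [Finset.sum_apply]
      simp [Pi.single_apply]
    conv_lhs => rw [ha]
    rw [map_sum, Finsupp.finset_sum_apply]
    exact Finset.sum_congr rfl fun i _ => by
      rw [map_smul, Finsupp.smul_apply, smul_eq_mul]
  have hd : ∀ t, B (v t) (v t) ≠ 0 := by
    intro t hdt
    have hall : ∀ x, B (v t) x = 0 := by
      intro x
      have hx := Module.Basis.sum_repr v x
      calc B (v t) x = B (v t) (∑ u, v.repr x u • v u) := by rw [hx]
        _ = ∑ u, v.repr x u * B (v t) (v u) := by
            rw [map_sum]
            exact Finset.sum_congr rfl fun u _ => by rw [map_smul, smul_eq_mul]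
        _ = 0 := Finset.sum_eq_zero fun u _ => by
            rcases eq_or_ne t u with rfl | htu
            · rw [hdt, mul_zero]
            · rw [hortho t u htu, mul_zero]
    have hcol : ∀ j, ∑ i, Mc F i j * (v t) i = 0 := by
      intro j
      have hone := hall (Pi.single j (1:k))
      rw [hBval] at hone
      rw [← hone]
      refine Finset.sum_congr rfl fun i _ => ?_
      rw [Finset.sum_eq_single j]
      · simp
      · intro b _ hb
        simp [Pi.single_apply, Ne.symm hb]
      · intro h; exact absurd (Finset.mem_univ j) h
    exact Module.Basis.ne_zero v t (hnd _ hcol)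
  have hsq : ∀ t, ∃ s : k, s^2 = B (v t) (v t) := fun t =>
    IsAlgClosed.exists_pow_nat_eq _ two_pos
  choose s hs using hsq
  have hs0 : ∀ t, s t ≠ 0 := by
    intro t h
    exact hd t (by rw [← hs t, h]; ring)
  refine ⟨fun t i => s t * v.repr (Pi.single i (1:k)) t, fun t j => (s t)⁻¹ * (v t j), ?_, ?_, ?_⟩
  · -- eval formula
    intro a
    have hlin : ∀ t, ∑ i, (s t * v.repr (Pi.single i (1:k)) t) * a i = s t * v.repr a t := by
      intro t
      rw [hrepr0 a t, Finset.mul_sum]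
      exact Finset.sum_congr rfl fun i _ => by ring
    have hexp : B a a = ∑ t, ∑ u, (v.repr a t * v.repr a u) * B (v t) (v u) := by
      have h1 : ∀ zz, B a zz = ∑ t, v.repr a t * B (v t) zz := by
        intro zz
        conv_lhs => rw [← Module.Basis.sum_repr v a]
        rw [map_sum, LinearMap.sum_apply]
        exact Finset.sum_congr rfl fun t _ => by rw [map_smul, LinearMap.smul_apply, smul_eq_mul]
      have h2 : ∀ t, B (v t) a = ∑ u, v.repr a u * B (v t) (v u) := by
        intro t
        conv_lhs => rw [← Module.Basis.sum_repr v a]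
        rw [map_sum]
        exact Finset.sum_congr rfl fun u _ => by rw [map_smul, smul_eq_mul]
      rw [h1 a]
      refine Finset.sum_congr rfl fun t _ => ?_
      rw [h2 t, Finset.mul_sum]
      exact Finset.sum_congr rfl fun u _ => by ring
    calc eval a F = B a a := by rw [hBval, quadratic_eval hF]
      _ = ∑ t, ∑ u, (v.repr a t * v.repr a u) * B (v t) (v u) := hexp
      _ = ∑ t, (s t * v.repr a t)^2 := by
          refine Finset.sum_congr rfl fun t _ => ?_
          rw [Finset.sum_eq_single t]
          · rw [← hs t]; ring
          · intro u _ hu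
            rw [hortho t u (Ne.symm hu), mul_zero]
          · intro h; exact absurd (Finset.mem_univ t) h
      _ = ∑ t, (∑ i, (s t * v.repr (Pi.single i (1:k)) t) * a i)^2 := by
          exact Finset.sum_congr rfl fun t _ => by rw [hlin t]
  · -- reconstruction
    intro z i
    calc ∑ t, (∑ j, ((s t)⁻¹ * v t j) * z j) * (s t * v.repr (Pi.single i 1 : Fin n → k) t)
        = ∑ t, (∑ j, v t j * z j) * v.repr (Pi.single i 1 : Fin n → k) t := by
          refine Finset.sum_congr rfl fun t _ => ?_
          rw [show ∑ j, ((s t)⁻¹ * v t j) * z j = (s t)⁻¹ * ∑ j, v t j * z j by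
            rw [Finset.mul_sum]; exact Finset.sum_congr rfl fun j _ => by ring]
          rw [show ((s t)⁻¹ * ∑ j, v t j * z j) * (s t * v.repr (Pi.single i 1 : Fin n → k) t)
              = ((s t)⁻¹ * s t) * ((∑ j, v t j * z j) * v.repr (Pi.single i 1 : Fin n → k) t)
            from by ring, inv_mul_cancel₀ (hs0 t), one_mul]
      _ = ∑ t, ∑ j, v.repr (Pi.single i 1 : Fin n → k) t * v t j * z j := by
          refine Finset.sum_congr rfl fun t _ => ?_
          rw [Finset.sum_mul]
          exact Finset.sum_congr rfl fun j _ => by ring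
      _ = ∑ j, (∑ t, v.repr (Pi.single i 1 : Fin n → k) t * v t j) * z j := by
          rw [Finset.sum_comm]
          exact Finset.sum_congr rfl fun j _ => (Finset.sum_mul _ _ _).symm
      _ = ∑ j, ((Pi.single i 1 : Fin n → k) j) * z j := by
          refine Finset.sum_congr rfl fun j _ => ?_
          have hzj := congrFun (Module.Basis.sum_repr v (Pi.single i 1 : Fin n → k)) j
          rw [Finset.sum_apply] at hzj
          simp only [Pi.smul_apply, smul_eq_mul] at hzj
          rw [hzj]
      _ = z i := by
          simp [Pi.single_apply]
  · -- biorthogonality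
    intro t u
    have hbi : ∑ j, ((s t)⁻¹ * v t j) * (s u * v.repr (Pi.single j 1 : Fin n → k) u)
        = (s t)⁻¹ * s u * v.repr (v t) u := by
      rw [hrepr0 (v t) u, Finset.mul_sum]
      exact Finset.sum_congr rfl fun j _ => by ring
    rw [hbi, Module.Basis.repr_self]
    rcases eq_or_ne t u with rfl | htu
    · simp [inv_mul_cancel₀ (hs0 t)]
    · simp [Finsupp.single_apply, htu]


lemma exists_eval_ne_zero_of_ne_zero [IsAlgClosed k] [CharZero k]
    {g : MvPolynomial (Fin n) k} (hg : g ≠ 0) : ∃ x : Fin n → k, eval x g ≠ 0 := by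
  by_contra hc
  push_neg at hc
  exact hg (MvPolynomial.funext (q := 0) (fun x => by rw [hc x, map_zero]))

lemma exists_good_decomp [IsAlgClosed k] [CharZero k] (hn : 1 ≤ n)
    {F : MvPolynomial (Fin n) k} (hF : F.IsHomogeneous 2)
    {p : MvPolynomial (Fin n) k} {e : ℕ} (hp : p.IsHomogeneous e)
    {a0 : Fin n → k} (hpa0 : eval a0 p ≠ 0)
    (l0 w : Fin n → Fin n → k)
    (hFeval : ∀ a : Fin n → k, eval a F = ∑ t, (∑ i, l0 t i * a i)^2)
    (hrec : ∀ (z : Fin n → k) (i : Fin n), ∑ t, (∑ j, w t j * z j) * l0 t i = z i)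
    (hbi : ∀ t u : Fin n, ∑ j, w t j * l0 u j = if t = u then 1 else 0) :
    ∃ m : Fin n → Fin n → k, (∀ j, eval (m j) p ≠ 0) ∧
      ∀ a : Fin n → k, eval a F = ∑ j, (∑ i, m j i * a i)^2 := by
  classical
  set Dq : MvPolynomial (Fin n) k := ∑ t, (linForm (w t))^2 with hDq_def
  have hDq_eval : ∀ z : Fin n → k, eval z Dq = ∑ t, (∑ j, w t j * z j)^2 := by
    intro z
    rw [hDq_def, map_sum]
    exact Finset.sum_congr rfl fun t _ => by rw [map_pow, eval_linForm]
  have hDqne : Dq ≠ 0 := by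
    intro h
    have h1 : eval (l0 ⟨0, hn⟩) Dq = 1 := by
      rw [hDq_eval]
      have : ∀ t, (∑ j, w t j * l0 ⟨0, hn⟩ j)^2
          = if t = (⟨0, hn⟩ : Fin n) then 1 else 0 := by
        intro t
        rw [hbi t ⟨0, hn⟩]
        split_ifs <;> norm_num
      rw [Finset.sum_congr rfl fun t _ => this t, Finset.sum_ite_eq' Finset.univ]
      simp
    rw [h, map_zero] at h1
    exact zero_ne_one h1
  have hpne : p ≠ 0 := fun h => hpa0 (by rw [h, map_zero])
  obtain ⟨z, hz⟩ := exists_eval_ne_zero_of_ne_zero (mul_ne_zero hpne hDqne)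
  rw [map_mul, mul_ne_zero_iff] at hz
  obtain ⟨hzp, hzD⟩ := hz
  set y : Fin n → k := fun t => ∑ j, w t j * z j with hy_def
  have hc0 : ∑ t, y t ^ 2 ≠ 0 := by
    have h := hzD
    rw [hDq_eval z] at h
    exact h
  obtain ⟨s, hs⟩ := IsAlgClosed.exists_pow_nat_eq (∑ t, y t ^ 2) (by norm_num : (0:ℕ) < 2)
  have hs0 : s ≠ 0 := by
    intro h
    rw [h] at hs
    exact hc0 (by rw [← hs]; ring)
  set u : Fin n → k := fun t => s⁻¹ * y t with hu_def
  have husq : ∑ t, u t ^ 2 = 1 := by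
    rw [hu_def]
    have : ∀ t, (s⁻¹ * y t)^2 = (s^2)⁻¹ * y t ^2 := fun t => by
      rw [mul_pow, inv_pow]
    rw [Finset.sum_congr rfl fun t _ => this t, ← Finset.mul_sum, ← hs,
      inv_mul_cancel₀ (pow_ne_zero 2 hs0)]
  have hrecu : ∀ i, ∑ t, u t * l0 t i = s⁻¹ * z i := by
    intro i
    rw [hu_def, ← hrec z i, Finset.mul_sum]
    exact Finset.sum_congr rfl fun t _ => by rw [hy_def]; ring
  -- polynomial family
  set Wsq : MvPolynomial (Fin n) k := ∑ i, X i ^ 2 with hW_def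
  set R : Fin n → Fin n → MvPolynomial (Fin n) k := fun j i =>
    Wsq * C (l0 j i) - C 2 * X j * (∑ t, X t * C (l0 t i)) with hR_def
  have hWeval : ∀ x : Fin n → k, eval x Wsq = ∑ a, x a ^ 2 := by
    intro x
    rw [hW_def, map_sum]
    exact Finset.sum_congr rfl fun a _ => by rw [map_pow, eval_X]
  have hReval : ∀ (x : Fin n → k) (j i : Fin n),
      eval x (R j i) = (∑ a, x a ^ 2) * l0 j i - 2 * x j * (∑ t, x t * l0 t i) := by
    intro x j i
    rw [hR_def]
    simp only [map_sub, map_mul, map_sum, eval_C, eval_X, hWeval]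
  set Q : Fin n → MvPolynomial (Fin n) k := fun j => aeval (R j) p with hQ_def
  have hQeval : ∀ (x : Fin n → k) (j : Fin n),
      eval x (Q j) = eval (fun i => eval x (R j i)) p := by
    intro x j
    rw [hQ_def]
    exact eval_aeval'' x (R j) p
  have hQne : ∀ j, Q j ≠ 0 := by
    intro j
    set ε : k := if u j = 1 then -1 else 1 with hε_def
    have hε2 : ε^2 = 1 := by rw [hε_def]; split_ifs <;> norm_num
    have hεne : ε ≠ 0 := by rw [hε_def]; split_ifs <;> norm_num
    have hεu : 1 - ε * u j ≠ 0 := by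
      rw [hε_def]
      split_ifs with h
      · rw [h]; norm_num
      · rw [one_mul]
        exact sub_ne_zero.mpr (Ne.symm h)
    set x : Fin n → k := fun t => (if t = j then 1 else 0) - ε * u t with hx_def
    have hxj : x j = 1 - ε * u j := by rw [hx_def]; simp
    have hA : ∑ a, x a ^ 2 = 2 * (1 - ε * u j) := by
      have hterm : ∀ a, x a ^ 2 = ((if a = j then (1:k) else 0)
          - 2 * ε * (if a = j then u a else 0) + ε^2 * u a ^ 2) := by
        intro a
        rw [hx_def]
        dsimp only
        split_ifs with h
        · ring
        · ring
      rw [Finset.sum_congr rfl fun a _ => hterm a]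
      rw [Finset.sum_add_distrib, Finset.sum_sub_distrib, ← Finset.mul_sum, ← Finset.mul_sum]
      rw [Finset.sum_ite_eq' Finset.univ j, Finset.sum_ite_eq' Finset.univ j, husq, hε2]
      simp only [Finset.mem_univ, if_true]
      ring
    have hσ : ∀ i, ∑ t, x t * l0 t i = l0 j i - ε * (s⁻¹ * z i) := by
      intro i
      have : ∀ t, x t * l0 t i = (if t = j then l0 t i else 0) - ε * (u t * l0 t i) := by
        intro t
        rw [hx_def]
        dsimp only
        split_ifs <;> ring
      rw [Finset.sum_congr rfl fun t _ => this t, Finset.sum_sub_distrib, ← Finset.mul_sum,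
        hrecu i, Finset.sum_ite_eq' Finset.univ j]
      simp only [Finset.mem_univ, if_true]
    set μ : k := 2 * (1 - ε * u j) * ε * s⁻¹ with hμ_def
    have hμne : μ ≠ 0 := by
      rw [hμ_def]
      exact mul_ne_zero (mul_ne_zero (mul_ne_zero two_ne_zero hεu) hεne) (inv_ne_zero hs0)
    have hxR : ∀ i, eval x (R j i) = μ * z i := by
      intro i
      rw [hReval, hA, hσ i, hxj, hμ_def]
      ring
    intro hQ0
    have : eval x (Q j) = μ ^ e * eval z p := by
      rw [hQeval]
      rw [show (fun i => eval x (R j i)) = fun i => μ * z i from funext hxR]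
      exact homog_eval_smul hp μ z
    rw [hQ0, map_zero] at this
    exact (mul_ne_zero (pow_ne_zero e hμne) hzp) this.symm
  have hWne : Wsq ≠ 0 := by
    intro h
    have h1 : eval (fun _ => (1:k)) Wsq = (n:k) := by
      rw [hWeval]
      simp
    rw [h, map_zero] at h1
    exact (Nat.cast_ne_zero (R := k)).mpr (by omega : n ≠ 0) h1.symm
  have hGne : Wsq * ∏ j, Q j ≠ 0 :=
    mul_ne_zero hWne (Finset.prod_ne_zero_iff.mpr fun j _ => hQne j)
  obtain ⟨xs, hxs⟩ := exists_eval_ne_zero_of_ne_zero hGne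
  rw [map_mul, mul_ne_zero_iff] at hxs
  obtain ⟨hq, hQs⟩ := hxs
  rw [map_prod, Finset.prod_ne_zero_iff] at hQs
  set q : k := eval xs Wsq with hq_def
  have hqz : q ≠ 0 := hq
  refine ⟨fun j i => q⁻¹ * eval xs (R j i), ?_, ?_⟩
  · intro j
    have : eval (fun i => q⁻¹ * eval xs (R j i)) p
        = (q⁻¹)^e * eval (fun i => eval xs (R j i)) p :=
      homog_eval_smul hp q⁻¹ _
    rw [this, ← hQeval]
    exact mul_ne_zero (pow_ne_zero e (inv_ne_zero hqz)) (hQs j (Finset.mem_univ j))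
  · intro a
    set β : Fin n → k := fun t => ∑ i, l0 t i * a i with hβ_def
    set τ : k := ∑ t, xs t * β t with hτ_def
    have hστ : ∑ i, (∑ t, xs t * l0 t i) * a i = τ := by
      calc ∑ i, (∑ t, xs t * l0 t i) * a i
          = ∑ i, ∑ t, xs t * (l0 t i * a i) := by
            refine Finset.sum_congr rfl fun i _ => ?_
            rw [Finset.sum_mul]
            exact Finset.sum_congr rfl fun t _ => by ring
        _ = ∑ t, ∑ i, xs t * (l0 t i * a i) := Finset.sum_comm
        _ = τ := by
            rw [hτ_def]
            refine Finset.sum_congr rfl fun t _ => ?_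
            rw [← Finset.mul_sum, hβ_def]
    have hprod : ∀ j, ∑ i, (q⁻¹ * eval xs (R j i)) * a i
        = β j + (-2 * q⁻¹ * τ) * xs j := by
      intro j
      have h1 : ∀ i, eval xs (R j i) = q * l0 j i - 2 * xs j * (∑ t, xs t * l0 t i) := by
        intro i
        rw [hReval, hq_def, hWeval]
      calc ∑ i, (q⁻¹ * eval xs (R j i)) * a i
          = q⁻¹ * ∑ i, eval xs (R j i) * a i := by
            rw [Finset.mul_sum]
            exact Finset.sum_congr rfl fun i _ => by ring
        _ = q⁻¹ * (q * β j - 2 * xs j * τ) := by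
            congr 1
            rw [Finset.sum_congr rfl fun i _ => by rw [h1 i]]
            calc ∑ i, (q * l0 j i - 2 * xs j * (∑ t, xs t * l0 t i)) * a i
                = ∑ i, (q * (l0 j i * a i) - 2 * xs j * ((∑ t, xs t * l0 t i) * a i)) := by
                  refine Finset.sum_congr rfl fun i _ => by ring
              _ = q * (∑ i, l0 j i * a i) - 2 * xs j * (∑ i, (∑ t, xs t * l0 t i) * a i) := by
                  rw [Finset.sum_sub_distrib, Finset.mul_sum, Finset.mul_sum]
              _ = q * β j - 2 * xs j * τ := by rw [hστ, hβ_def]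
        _ = β j + (-2 * q⁻¹ * τ) * xs j := by
            field_simp
            ring
    rw [Finset.sum_congr rfl fun j _ => by rw [hprod j]]
    have hexp : ∑ j, (β j + (-2 * q⁻¹ * τ) * xs j)^2
        = (∑ j, β j ^2) + 2 * (-2 * q⁻¹ * τ) * (∑ j, β j * xs j)
          + (-2 * q⁻¹ * τ)^2 * (∑ j, xs j ^2) := by
      have hterm : ∀ j, (β j + (-2 * q⁻¹ * τ) * xs j)^2
          = β j^2 + 2 * (-2 * q⁻¹ * τ) * (β j * xs j) + (-2 * q⁻¹ * τ)^2 * xs j^2 := by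
        intro j
        ring
      rw [Finset.sum_congr rfl fun j _ => hterm j, Finset.sum_add_distrib,
        Finset.sum_add_distrib, ← Finset.mul_sum, ← Finset.mul_sum]
    rw [hexp]
    have hβx : ∑ j, β j * xs j = τ := by
      rw [hτ_def]
      exact Finset.sum_congr rfl fun j _ => by ring
    have hxsq : ∑ j, xs j ^ 2 = q := by rw [hq_def, hWeval]
    rw [hβx, hxsq, hFeval a]
    simp only [hβ_def]
    have hzero : 2 * (-2 * q⁻¹ * τ) * τ + (-2 * q⁻¹ * τ)^2 * q = 0 := by
      field_simp
      ring
    linear_combination -hzero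


lemma sum_sq_isHomogeneous : (∑ i, (X i : MvPolynomial (Fin n) k)^2).IsHomogeneous 2 :=
  IsHomogeneous.sum _ _ _ fun i _ => by
    simpa using (isHomogeneous_X k i).pow 2

lemma essDep_sum_sq [CharZero k] :
    EssDep (∑ i, (X i : MvPolynomial (Fin n) k)^2) := by
  intro m hm hW
  obtain ⟨y, hy, G, hG⟩ := hW
  set c : Fin m → Fin n → k := fun j i => coeff (Finsupp.single i 1) (y j) with hc_def
  have hyc : ∀ j, y j = linForm (c j) := fun j => homog1_structure (hy j)
  have hFa : ∀ a : Fin n → k,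
      ∑ i, a i ^ 2 = eval (fun j => ∑ i, c j i * a i) G := by
    intro a
    have h1 : eval a (∑ i, (X i : MvPolynomial (Fin n) k)^2) = ∑ i, a i ^ 2 := by
      rw [map_sum]
      exact Finset.sum_congr rfl fun i _ => by rw [map_pow, eval_X]
    have h2 := congrArg (eval a) hG
    rw [h1] at h2
    rw [h2, eval_aeval'']
    have hfn : (fun j => eval a (y j)) = fun j => ∑ i, c j i * a i := by
      funext j
      rw [hyc j, eval_linForm]
    rw [hfn]
  -- the common kernel vector
  set Φ : (Fin n → k) →ₗ[k] (Fin m → k) :=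
    { toFun := fun a => fun j => ∑ i, c j i * a i
      map_add' := fun a b => by
        funext j
        simp only [Pi.add_apply]
        rw [← Finset.sum_add_distrib]
        exact Finset.sum_congr rfl fun i _ => by ring
      map_smul' := fun r a => by
        funext j
        simp only [Pi.smul_apply, smul_eq_mul, RingHom.id_apply]
        rw [Finset.mul_sum]
        exact Finset.sum_congr rfl fun i _ => by ring } with hΦ_def
  have hΦval : ∀ a j, Φ a j = ∑ i, c j i * a i := fun a j => rfl
  have hninj : ¬ Function.Injective Φ := by
    intro hinj
    have := LinearMap.finrank_le_finrank_of_injective hinj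
    rw [Module.finrank_fin_fun, Module.finrank_fin_fun] at this
    omega
  have hker : ∃ v : Fin n → k, Φ v = 0 ∧ v ≠ 0 := by
    rw [← LinearMap.ker_eq_bot] at hninj
    obtain ⟨v, hv1, hv2⟩ := Submodule.exists_mem_ne_zero_of_ne_bot hninj
    exact ⟨v, LinearMap.mem_ker.mp hv1, hv2⟩
  obtain ⟨v, hΦv, hv⟩ := hker
  have h1 : ∀ a : Fin n → k, ∑ i, (a i + v i) ^ 2 = ∑ i, a i ^ 2 := by
    intro a
    have hΦav : Φ (a + v) = Φ a := by rw [map_add, hΦv, add_zero]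
    have ha := hFa a
    have hav := hFa (a + v)
    simp only [Pi.add_apply] at hav
    have : (fun j => ∑ i, c j i * (a i + v i)) = (fun j => ∑ i, c j i * a i) := by
      funext j
      have := congrFun hΦav j
      rw [hΦval, hΦval] at this
      simpa [Pi.add_apply] using this
    rw [this] at hav
    rw [hav, ← ha]
  have hv2 : ∑ i, v i ^ 2 = 0 := by
    have := h1 0
    simpa using this
  have hav : ∀ a : Fin n → k, ∑ i, a i * v i = 0 := by
    intro a
    have hexp : ∑ i, (a i + v i)^2
        = ∑ i, a i ^2 + 2 * ∑ i, a i * v i + ∑ i, v i ^2 := by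
      rw [Finset.mul_sum, ← Finset.sum_add_distrib, ← Finset.sum_add_distrib]
      exact Finset.sum_congr rfl fun i _ => by ring
    have h := h1 a
    rw [hexp, hv2] at h
    have h2 : 2 * ∑ i, a i * v i = 0 := by linear_combination h
    have : (2:k) ≠ 0 := two_ne_zero
    exact (mul_eq_zero.mp h2).resolve_left this
  apply hv
  funext i0
  have := hav (Pi.single i0 1)
  rw [Finset.sum_eq_single i0] at this
  · simpa using this
  · intro b _ hb
    simp [Pi.single_apply, hb]
  · intro h; exact absurd (Finset.mem_univ i0) h

end Aux

end WaringSetup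

/-- For every integer `n ≥ 1`, the open Waring rank of quadratic forms satisfies
`Ork(n, 2) = n`. -/
theorem stmt_2 (k : Type) [Field k] [IsAlgClosed k] [CharZero k]
    (n : ℕ) (hn : 1 ≤ n) :
    OrkND k n 2 = (n : ℕ∞) := by
  have hF0 : (∑ i, (X i : MvPolynomial (Fin n) k)^2).IsHomogeneous 2 :=
    sum_sq_isHomogeneous
  have hEss : EssDep (∑ i, (X i : MvPolynomial (Fin n) k)^2) := essDep_sum_sq
  apply le_antisymm
  · -- upper bound
    refine iSup_le fun F => iSup_le fun V => ?_
    obtain ⟨hFhom, hFess⟩ := F.2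
    obtain ⟨⟨P, hP, hVP⟩, hVne⟩ := V.2
    have hex : ∃ a0, a0 ∉ V.1 := by
      by_contra h
      push_neg at h
      exact hVne (Set.eq_univ_of_forall h)
    obtain ⟨a0, ha0⟩ := hex
    have hex2 : ∃ p ∈ P, eval a0 p ≠ 0 := by
      by_contra h
      push_neg at h
      exact ha0 (by rw [hVP]; exact fun p hp => h p hp)
    obtain ⟨p, hpP, hpa0⟩ := hex2
    obtain ⟨e, hpe⟩ := hP p hpP
    have hnd := nondeg_of_essDep hFhom hFess hn
    obtain ⟨l0, w, hFeval, hrec, hbi⟩ := exists_sq_decomp hFhom hnd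
    obtain ⟨m, hm1, hm2⟩ := exists_good_decomp hn hFhom hpe hpa0 l0 w hFeval hrec hbi
    apply sInf_le
    refine ⟨n, ⟨m, ?_, ?_⟩, rfl⟩
    · intro j hj
      rw [hVP] at hj
      exact hm1 j (hj p hpP)
    · apply MvPolynomial.funext
      intro x
      rw [hm2 x, map_sum]
      exact Finset.sum_congr rfl fun j _ => by rw [map_pow, eval_linForm]
  · -- lower bound
    have hVcl : HomZariskiClosed (∅ : Set (Fin n → k)) := by
      refine ⟨{C 1}, ?_, ?_⟩
      · intro p hp
        rw [Set.mem_singleton_iff] at hp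
        exact ⟨0, hp ▸ isHomogeneous_C _ _⟩
      · ext a
        simp
    have hVne : (∅ : Set (Fin n → k)) ≠ Set.univ := by
      intro h
      have : (fun _ => (0:k)) ∈ (∅ : Set (Fin n → k)) := h ▸ Set.mem_univ _
      exact this
    have h2 : (n : ℕ∞) ≤ OrkV 2 (∑ i, (X i : MvPolynomial (Fin n) k)^2)
        (∅ : Set (Fin n → k)) := by
      apply le_sInf
      rintro b ⟨m, ⟨l, hl, hF⟩, rfl⟩
      rw [Nat.cast_le]
      by_contra hmn
      push_neg at hmn
      apply hEss m hmn
      refine ⟨fun j => linForm (l j), fun j => linForm_isHomogeneous (l j), ∑ j, (X j)^2, ?_⟩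
      rw [hF, map_sum]
      exact Finset.sum_congr rfl fun j _ => by rw [map_pow, aeval_X]
    have h1 : (n : ℕ∞) ≤ Ork 2 (∑ i, (X i : MvPolynomial (Fin n) k)^2) :=
      le_trans h2 (le_iSup (fun V : {V : Set (Fin n → k) //
        HomZariskiClosed V ∧ V ≠ Set.univ} =>
          OrkV 2 (∑ i, (X i : MvPolynomial (Fin n) k)^2) V.1) ⟨∅, hVcl, hVne⟩)
    exact le_trans h1 (le_iSup (fun F : {F : MvPolynomial (Fin n) k //
        F.IsHomogeneous 2 ∧ EssDep F} => Ork 2 F.1) ⟨∑ i, (X i)^2, hF0, hEss⟩)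
end

section
/- For every integer d ≥ 2, the classical Waring rank of the binary form x_1^{d-1} x_2 is exactly d; in particular, x_1^{d-1} x_2 cannot be written as a sum of fewer than d d-th powers of linear forms. -/
open MvPolynomial

section WaringAux

variable {k : Type} [Field k]

lemma waring_linForm_two (a : Fin 2 → k) :
    linForm a = C (a 0) * X 0 + C (a 1) * X 1 := by
  simp [linForm, Fin.sum_univ_two]

lemma waring_finsupp_eq_iff (t j d : ℕ) (ht : t ≤ d) (hj : j ≤ d) :
    (Finsupp.single (0 : Fin 2) t + Finsupp.single 1 (d - t)
      = Finsupp.single (0 : Fin 2) (d - j) + Finsupp.single 1 j) ↔ t = d - j := by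
  constructor
  · intro h
    have h0 := DFunLike.congr_fun h 0
    simp [Finsupp.single_apply] at h0
    omega
  · intro h
    subst h
    have : d - (d - j) = j := by omega
    rw [this]

lemma waring_coeff_linForm_pow (a b : k) (j d : ℕ) (hj : j ≤ d) :
    coeff (Finsupp.single 0 (d - j) + Finsupp.single 1 j)
      ((C a * X 0 + C b * X 1) ^ d : MvPolynomial (Fin 2) k)
      = d.choose j * (a ^ (d - j) * b ^ j) := by
  rw [add_pow, coeff_sum]
  have key : ∀ t ∈ Finset.range (d + 1),
      coeff (Finsupp.single 0 (d - j) + Finsupp.single 1 j)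
        ((C a * X 0) ^ t * (C b * X 1) ^ (d - t) * (d.choose t : MvPolynomial (Fin 2) k))
      = if t = d - j then (d.choose t : k) * (a ^ (d - j) * b ^ j) else 0 := by
    intro t ht
    rw [Finset.mem_range] at ht
    have expand : (C a * X 0) ^ t * (C b * X 1) ^ (d - t) * (d.choose t : MvPolynomial (Fin 2) k)
        = monomial (Finsupp.single 0 t + Finsupp.single 1 (d - t))
            ((d.choose t : k) * (a ^ t * b ^ (d - t))) := by
      rw [mul_pow, mul_pow, ← C_pow, ← C_pow]
      rw [X_pow_eq_monomial, X_pow_eq_monomial]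
      rw [← map_natCast (C : k →+* MvPolynomial (Fin 2) k)]
      rw [C_mul_monomial, C_mul_monomial, monomial_mul, mul_comm _ (C (d.choose t : k)),
        C_mul_monomial]
      ring_nf
    rw [expand, coeff_monomial]
    by_cases h : t = d - j
    · subst h
      rw [if_pos ((waring_finsupp_eq_iff _ j d (by omega) hj).2 rfl), if_pos rfl,
        show d - (d - j) = j by omega]
    · rw [if_neg (fun hc => h ((waring_finsupp_eq_iff t j d (by omega) hj).1 hc)), if_neg h]
  rw [Finset.sum_congr rfl key, Finset.sum_ite_eq' (Finset.range (d + 1)) (d - j)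
      (fun t => (d.choose t : k) * (a ^ (d - j) * b ^ j)),
    if_pos (by simp), Nat.choose_symm hj]

lemma waring_lower_aux (d m : ℕ) (hd : 2 ≤ d) (hm : m < d) (a b : Fin m → k)
    (hu0 : ∀ j, j ≤ d → j ≠ 1 → (∑ i, a i ^ (d - j) * b i ^ j) = 0)
    (hu1 : (∑ i, a i ^ (d - 1) * b i ^ 1) ≠ 0) : False := by
  classical
  set s : Finset (Fin m) := Finset.univ.filter (fun i => b i ≠ 0) with hs
  have hNle : s.card ≤ d - 1 := by
    have h1 : s.card ≤ m := le_trans (Finset.card_le_univ s) (by simp)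
    omega
  set N := s.card with hN
  have hzero : ∑ i, a i ^ (d - 1 - N) * b i * ∏ t ∈ s, (b t * a i - a t * b i) = 0 := by
    apply Finset.sum_eq_zero
    intro i _
    by_cases hb : b i = 0
    · simp [hb]
    · have hi : i ∈ s := by simp [hs, hb]
      rw [Finset.prod_eq_zero hi (by ring)]
      ring
  have hprodne : (∏ t ∈ s, b t) ≠ 0 := by
    rw [Finset.prod_ne_zero_iff]
    intro t ht
    rw [hs, Finset.mem_filter] at ht
    exact ht.2
  apply hu1
  have main : (∏ t ∈ s, b t) * (∑ i, a i ^ (d - 1) * b i ^ 1) = 0 := by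
    calc (∏ t ∈ s, b t) * ∑ i, a i ^ (d - 1) * b i ^ 1
        = ∑ T ∈ s.powerset, ((∏ t ∈ T, b t) * (∏ t ∈ s \ T, -a t)) *
            ∑ i, a i ^ (d - (N - T.card + 1)) * b i ^ (N - T.card + 1) := by
          rw [Finset.sum_eq_single_of_mem s (Finset.mem_powerset_self s)]
          · simp [hN]
          · intro T hT hTne
            have hTsub : T ⊆ s := Finset.mem_powerset.1 hT
            have hTcard : T.card < N := by
              rcases lt_or_eq_of_le (Finset.card_le_card hTsub) with h | h
              · exact h
              · exact absurd (Finset.eq_of_subset_of_card_le hTsub (le_of_eq h.symm)) hTne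
            rw [hu0 (N - T.card + 1) (by omega) (by omega), mul_zero]
      _ = ∑ T ∈ s.powerset, ∑ i, ((∏ t ∈ T, b t) * (∏ t ∈ s \ T, -a t)) *
            (a i ^ (d - (N - T.card + 1)) * b i ^ (N - T.card + 1)) := by
          simp_rw [Finset.mul_sum]
      _ = ∑ i, ∑ T ∈ s.powerset, ((∏ t ∈ T, b t) * (∏ t ∈ s \ T, -a t)) *
            (a i ^ (d - (N - T.card + 1)) * b i ^ (N - T.card + 1)) := Finset.sum_comm
      _ = ∑ i, a i ^ (d - 1 - N) * b i * ∏ t ∈ s, (b t * a i - a t * b i) := by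
          apply Finset.sum_congr rfl
          intro i _
          have hexp : ∏ t ∈ s, (b t * a i - a t * b i)
              = ∑ T ∈ s.powerset, (∏ t ∈ T, b t * a i) * ∏ t ∈ s \ T, -(a t * b i) := by
            rw [← Finset.prod_add]
            apply Finset.prod_congr rfl
            intro t _
            ring
          rw [hexp, Finset.mul_sum]
          apply Finset.sum_congr rfl
          intro T hT
          have hTsub : T ⊆ s := Finset.mem_powerset.1 hT
          have hTcard : T.card ≤ N := Finset.card_le_card hTsub
          have h1 : ∏ t ∈ T, b t * a i = (∏ t ∈ T, b t) * a i ^ T.card := by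
            rw [Finset.prod_mul_distrib, Finset.prod_const]
          have h2 : ∏ t ∈ s \ T, -(a t * b i) = (∏ t ∈ s \ T, -a t) * b i ^ (N - T.card) := by
            rw [← Finset.card_sdiff_of_subset hTsub, ← Finset.prod_const, ← Finset.prod_mul_distrib]
            apply Finset.prod_congr rfl
            intro t _
            ring
          rw [h1, h2]
          have he1 : d - (N - T.card + 1) = (d - 1 - N) + T.card := by omega
          have he2 : N - T.card + 1 = 1 + (N - T.card) := by omega
          rw [he1, he2, pow_add, pow_add, pow_one]
          ring
      _ = 0 := hzero
  rcases mul_eq_zero.1 main with h | h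
  · exact absurd h hprodne
  · exact h

lemma waring_geom_sum_zeta (d r : ℕ) {ζ : k} (hζ : IsPrimitiveRoot ζ d) :
    (∑ j ∈ Finset.range d, ζ ^ (j * r)) = if d ∣ r then (d : k) else 0 := by
  have key : ∀ j, ζ ^ (j * r) = (ζ ^ r) ^ j := by
    intro j; rw [← pow_mul, mul_comm]
  simp_rw [key]
  split_ifs with h
  · rcases h with ⟨c, rfl⟩
    have : ζ ^ (d * c) = 1 := by rw [pow_mul, hζ.pow_eq_one, one_pow]
    simp [this]
  · have hne : ζ ^ r ≠ 1 := fun hc => h (hζ.dvd_of_pow_eq_one r hc)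
    have hdd : (ζ ^ r) ^ d = 1 := by
      rw [← pow_mul, mul_comm, pow_mul, hζ.pow_eq_one, one_pow]
    have hgs := geom_sum_mul (ζ ^ r) d
    rw [hdd, sub_self] at hgs
    rcases mul_eq_zero.1 hgs with h1 | h1
    · exact h1
    · exact absurd (by rwa [sub_eq_zero] at h1) hne

lemma waring_construct_identity (d : ℕ) (hd : 2 ≤ d) {ζ : k} (hζ : IsPrimitiveRoot ζ d) :
    ∑ j ∈ Finset.range d, C (ζ ^ (j * (d - 1))) * (X 0 + C (ζ ^ j) * X 1) ^ d
      = C ((d : k) ^ 2) * ((X 0 : MvPolynomial (Fin 2) k) ^ (d - 1) * X 1) := by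
  calc ∑ j ∈ Finset.range d, C (ζ ^ (j * (d - 1))) * (X 0 + C (ζ ^ j) * X 1) ^ d
      = ∑ j ∈ Finset.range d, ∑ t ∈ Finset.range (d + 1),
          C (ζ ^ (j * (d - 1)) * ζ ^ (j * (d - t)) * (d.choose t : k)) *
            ((X 0 : MvPolynomial (Fin 2) k) ^ t * X 1 ^ (d - t)) := by
        refine Finset.sum_congr rfl fun j _ => ?_
        rw [add_pow, Finset.mul_sum]
        refine Finset.sum_congr rfl fun t _ => ?_
        rw [mul_pow, ← C_pow, ← pow_mul,
          ← map_natCast (C : k →+* MvPolynomial (Fin 2) k) (d.choose t), C_mul, C_mul]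
        ring
    _ = ∑ t ∈ Finset.range (d + 1),
          C ((∑ j ∈ Finset.range d, ζ ^ (j * ((d - 1) + (d - t)))) * (d.choose t : k)) *
            ((X 0 : MvPolynomial (Fin 2) k) ^ t * X 1 ^ (d - t)) := by
        rw [Finset.sum_comm]
        refine Finset.sum_congr rfl fun t _ => ?_
        rw [C_mul, map_sum, Finset.sum_mul, Finset.sum_mul]
        refine Finset.sum_congr rfl fun j _ => ?_
        rw [Nat.mul_add j (d - 1) (d - t), pow_add, C_mul, C_mul]
    _ = C ((d : k) ^ 2) * ((X 0 : MvPolynomial (Fin 2) k) ^ (d - 1) * X 1) := by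
        rw [Finset.sum_eq_single_of_mem (d - 1) (by simp)]
        · rw [waring_geom_sum_zeta _ _ hζ, if_pos (by exact ⟨1, by omega⟩)]
          have h1 : d.choose (d - 1) = d := by
            rw [Nat.choose_symm (by omega : 1 ≤ d), Nat.choose_one_right]
          have h2 : d - (d - 1) = 1 := by omega
          rw [h1, h2, pow_one, sq]
        · intro t ht htne
          rw [Finset.mem_range] at ht
          have hndvd : ¬ d ∣ (d - 1) + (d - t) := by
            intro ⟨c, hc⟩
            have hc2 : c < 2 := by
              by_contra hc2
              push_neg at hc2
              have : 2 * d ≤ d * c := by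
                calc 2 * d = d * 2 := by ring
                _ ≤ d * c := Nat.mul_le_mul_left d hc2
              omega
            interval_cases c <;> omega
          rw [waring_geom_sum_zeta _ _ hζ, if_neg hndvd, zero_mul, map_zero, zero_mul]

end WaringAux


/-- For every `d ≥ 2`, the classical Waring rank of `x₁^(d-1) x₂` is exactly `d`:
`d` is the least number of `d`-th powers of linear forms summing to it. -/
theorem stmt_9 (k : Type) [Field k] [IsAlgClosed k] [CharZero k]
    (d : ℕ) (hd : 2 ≤ d) :
    IsLeast {m : ℕ | ∃ l : Fin m → (Fin 2 → k),
      (X 0 : MvPolynomial (Fin 2) k) ^ (d - 1) * X 1 = ∑ i, linForm (l i) ^ d} d := by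
  have hdk : ((d : k) ^ 2) ≠ 0 := pow_ne_zero _ (Nat.cast_ne_zero.mpr (by omega))
  constructor
  · -- membership: an explicit decomposition into d powers
    haveI : NeZero ((d : ℕ) : k) := ⟨Nat.cast_ne_zero.mpr (by omega)⟩
    obtain ⟨ζ, hζ⟩ := HasEnoughRootsOfUnity.exists_primitiveRoot k d
    choose c hc using fun j : Fin d =>
      IsAlgClosed.exists_pow_nat_eq (ζ ^ ((j : ℕ) * (d - 1)) * ((d : k) ^ 2)⁻¹)
        (show 0 < d by omega)
    refine ⟨fun j => ![c j, c j * ζ ^ (j : ℕ)], ?_⟩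
    have hterm : ∀ j : Fin d, linForm (![c j, c j * ζ ^ (j : ℕ)]) ^ d
        = C ((d : k) ^ 2)⁻¹ *
            (C (ζ ^ ((j : ℕ) * (d - 1))) * (X 0 + C (ζ ^ (j : ℕ)) * X 1) ^ d) := by
      intro j
      have hfac : linForm (![c j, c j * ζ ^ (j : ℕ)] : Fin 2 → k)
          = C (c j) * (X 0 + C (ζ ^ (j : ℕ)) * X 1) := by
        rw [waring_linForm_two]
        simp only [Matrix.cons_val_zero, Matrix.cons_val_one, Matrix.head_cons, C_mul]
        ring
      rw [hfac, mul_pow, ← C_pow, hc j, C_mul]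
      ring
    simp_rw [hterm]
    rw [← Finset.mul_sum]
    rw [Fin.sum_univ_eq_sum_range
      (fun j => C (ζ ^ (j * (d - 1))) * (X 0 + C (ζ ^ j) * X 1) ^ d) d]
    rw [waring_construct_identity d hd hζ, ← mul_assoc, ← C_mul, inv_mul_cancel₀ hdk,
      C_1, one_mul]
  · -- lower bound
    rintro m ⟨l, hl⟩
    by_contra hlt
    push_neg at hlt
    have hu : ∀ j, j ≤ d →
        (d.choose j : k) * (∑ i, (l i 0) ^ (d - j) * (l i 1) ^ j)
          = if j = 1 then 1 else 0 := by
      intro j hj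
      have hco := congrArg (coeff (Finsupp.single 0 (d - j) + Finsupp.single 1 j)) hl
      rw [coeff_sum] at hco
      have hL : coeff (Finsupp.single 0 (d - j) + Finsupp.single (1 : Fin 2) j)
          ((X 0) ^ (d - 1) * X 1 : MvPolynomial (Fin 2) k)
          = if j = 1 then 1 else 0 := by
        rw [show (X 1 : MvPolynomial (Fin 2) k) = X 1 ^ 1 by rw [pow_one],
          X_pow_eq_monomial, X_pow_eq_monomial, monomial_mul, coeff_monomial, one_mul]
        have hiff := waring_finsupp_eq_iff (d - 1) j d (by omega) hj
        rw [show d - (d - 1) = 1 by omega] at hiff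
        by_cases h : j = 1
        · rw [if_pos (hiff.2 (by omega)), if_pos h]
        · rw [if_neg (fun hc => h (by have := hiff.1 hc; omega)), if_neg h]
      rw [hL] at hco
      have hR : ∀ i : Fin m, coeff (Finsupp.single 0 (d - j) + Finsupp.single (1 : Fin 2) j)
          (linForm (l i) ^ d) = (d.choose j : k) * ((l i 0) ^ (d - j) * (l i 1) ^ j) := by
        intro i
        rw [waring_linForm_two, waring_coeff_linForm_pow _ _ j d hj]
      rw [Finset.sum_congr rfl (fun i _ => hR i), ← Finset.mul_sum] at hco
      exact hco.symm
    have hchoose : ∀ j, j ≤ d → (d.choose j : k) ≠ 0 := fun j hj =>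
      Nat.cast_ne_zero.mpr (Nat.choose_pos hj).ne'
    have hu1 : (∑ i, (l i 0) ^ (d - 1) * (l i 1) ^ 1) ≠ 0 := by
      intro h0
      have := hu 1 (by omega)
      rw [h0, mul_zero, if_pos rfl] at this
      exact one_ne_zero this.symm
    have hu0 : ∀ j, j ≤ d → j ≠ 1 → (∑ i, (l i 0) ^ (d - j) * (l i 1) ^ j) = 0 := by
      intro j hj hj1
      have := hu j hj
      rw [if_neg hj1] at this
      exact (mul_eq_zero.1 this).resolve_left (hchoose j hj)
    exact waring_lower_aux d m hd hlt (fun i => l i 0) (fun i => l i 1) hu0 hu1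
end

section
/- Let F ∈ S_d and suppose ⋂_{i=1}^k m_i ⊆ F^⊥, where m_1,…,m_k are the homogeneous ideals in S* of k distinct points [l_1],…,[l_k] of the projective space P(S_1). Then F lies in the linear span of l_1^d, l_2^d, …, l_k^d. -/
open MvPolynomial

noncomputable section ApolarityAux

variable {k : Type} [Field k] {n : ℕ}

lemma degree_univ (s : Fin n →₀ ℕ) : s.degree = ∑ i, s i :=
  Finset.sum_subset (Finset.subset_univ _) fun _ _ h => Finsupp.notMem_support_iff.mp h

lemma iter_pderiv_monomial (i : Fin n) (t : Fin n →₀ ℕ) (e : k) (m : ℕ) :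
    (fun H : MvPolynomial (Fin n) k => pderiv i H)^[m] (monomial t e)
      = monomial (t - Finsupp.single i m) (e * ((t i).descFactorial m : k)) := by
  induction m with
  | zero => simp
  | succ m ih =>
    rw [Function.iterate_succ_apply', ih, pderiv_monomial]
    have h1 : t - Finsupp.single i m - Finsupp.single i 1 = t - Finsupp.single i (m + 1) := by
      rw [tsub_tsub, ← Finsupp.single_add]
    have h2 : (t - Finsupp.single i m) i = t i - m := by
      rw [Finsupp.tsub_apply, Finsupp.single_eq_same]
    rw [h1, h2, Nat.descFactorial_succ, Nat.cast_mul]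
    ring_nf

lemma foldr_iter_monomial (s : Fin n →₀ ℕ) (L : List (Fin n)) (hL : L.Nodup)
    (t : Fin n →₀ ℕ) (e : k) :
    L.foldr (fun i G => (fun H : MvPolynomial (Fin n) k => pderiv i H)^[s i] G) (monomial t e)
      = monomial (t - ∑ i ∈ L.toFinset, Finsupp.single i (s i))
          (e * ((∏ i ∈ L.toFinset, (t i).descFactorial (s i) : ℕ) : k)) := by
  induction L with
  | nil => simp
  | cons i L ih =>
    obtain ⟨hi, hL'⟩ := List.nodup_cons.mp hL
    have hiT : i ∉ L.toFinset := by simpa using hi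
    rw [List.foldr_cons, ih hL', iter_pderiv_monomial]
    have happ : (t - ∑ j ∈ L.toFinset, Finsupp.single j (s j)) i = t i := by
      rw [Finsupp.tsub_apply]
      have h0 : (∑ j ∈ L.toFinset, Finsupp.single j (s j)) i = 0 := by
        rw [Finsupp.finset_sum_apply]
        exact Finset.sum_eq_zero fun j hj =>
          Finsupp.single_eq_of_ne (fun h => hiT (h ▸ hj))
      rw [h0, Nat.sub_zero]
    rw [List.toFinset_cons, Finset.sum_insert hiT, Finset.prod_insert hiT, happ]
    have hexp : t - (∑ j ∈ L.toFinset, Finsupp.single j (s j)) - Finsupp.single i (s i)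
        = t - (Finsupp.single i (s i) + ∑ j ∈ L.toFinset, Finsupp.single j (s j)) := by
      rw [tsub_tsub, add_comm]
    rw [hexp, Nat.cast_mul]
    ring_nf

/-- The contraction operator `∂^s` as a linear map. -/
def Phi (s : Fin n →₀ ℕ) : MvPolynomial (Fin n) k →ₗ[k] MvPolynomial (Fin n) k :=
  (List.finRange n).foldr (fun i f => ((pderiv i).toLinearMap ^ (s i)) ∘ₗ f) LinearMap.id

lemma PhiAux (s : Fin n →₀ ℕ) (L : List (Fin n)) (F : MvPolynomial (Fin n) k) :
    (L.foldr (fun i (f : MvPolynomial (Fin n) k →ₗ[k] MvPolynomial (Fin n) k) =>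
      ((pderiv i).toLinearMap ^ (s i)) ∘ₗ f) LinearMap.id) F
      = L.foldr (fun i G => (fun H : MvPolynomial (Fin n) k => pderiv i H)^[s i] G) F := by
  induction L with
  | nil => rfl
  | cons i L ih =>
    rw [List.foldr_cons, List.foldr_cons, LinearMap.comp_apply, ih, Module.End.pow_apply]
    rfl

lemma Phi_apply (s : Fin n →₀ ℕ) (F : MvPolynomial (Fin n) k) :
    Phi s F = (List.finRange n).foldr
      (fun i G => (fun H : MvPolynomial (Fin n) k => pderiv i H)^[s i] G) F :=
  PhiAux s _ F

lemma Phi_monomial (s t : Fin n →₀ ℕ) (e : k) :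
    Phi s (monomial t e) = monomial (t - s)
      (e * ((∏ i, (t i).descFactorial (s i) : ℕ) : k)) := by
  rw [Phi_apply, foldr_iter_monomial s _ (List.nodup_finRange n), List.toFinset_finRange]
  congr 1
  rw [Finsupp.univ_sum_single s]

lemma Phi_eq_C {d : ℕ} (s : Fin n →₀ ℕ) (hs : s.degree = d)
    (G : MvPolynomial (Fin n) k) (hG : G.IsHomogeneous d) :
    Phi s G = C (((∏ i, (s i).factorial : ℕ) : k) * G.coeff s) := by
  classical
  conv_lhs => rw [G.as_sum, map_sum]
  have key : ∀ t ∈ G.support,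
      Phi s (monomial t (G.coeff t))
        = if t = s then C (((∏ i, (s i).factorial : ℕ) : k) * G.coeff s) else 0 := by
    intro t ht
    have htd : t.degree = d := by
      by_contra h
      exact (MvPolynomial.mem_support_iff.mp ht) (hG.coeff_eq_zero h)
    rw [Phi_monomial]
    by_cases hts : t = s
    · subst hts
      simp [Nat.descFactorial_self, tsub_self, monomial_zero', mul_comm]
    · rw [if_neg hts]
      have hex : ∃ i, t i < s i := by
        by_contra h
        push_neg at h
        apply hts
        ext i
        have hsum : ∑ i, t i = ∑ i, s i := by
          rw [← degree_univ, ← degree_univ, htd, hs]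
        by_contra hne
        have hlt : s i < t i := lt_of_le_of_ne (h i) (Ne.symm hne)
        have : ∑ j, s j < ∑ j, t j :=
          Finset.sum_lt_sum (fun j _ => h j) ⟨i, Finset.mem_univ i, hlt⟩
        omega
      obtain ⟨i, hi⟩ := hex
      have : (∏ i, (t i).descFactorial (s i)) = 0 :=
        Finset.prod_eq_zero (Finset.mem_univ i)
          (Nat.descFactorial_eq_zero_iff_lt.mpr hi)
      simp [this]
  rw [Finset.sum_congr rfl key, Finset.sum_ite_eq' G.support s]
  split
  · rfl
  · rw [MvPolynomial.notMem_support_iff.mp (by assumption)]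
    simp

lemma contract_eq_pairing {d : ℕ} (D G : MvPolynomial (Fin n) k)
    (hD : D.IsHomogeneous d) (hG : G.IsHomogeneous d) :
    contract D G = C (∑ s ∈ D.support,
      D.coeff s * (((∏ i, (s i).factorial : ℕ) : k) * G.coeff s)) := by
  unfold contract
  rw [map_sum]
  refine Finset.sum_congr rfl fun s hs => ?_
  have hsd : s.degree = d := by
    by_contra h
    exact (MvPolynomial.mem_support_iff.mp hs) (hD.coeff_eq_zero h)
  rw [← Phi_apply, Phi_eq_C s hsd G hG, smul_eq_C_mul, ← C_mul]

lemma pderiv_linForm (a : Fin n → k) (i : Fin n) : pderiv i (linForm a) = C (a i) := by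
  classical
  unfold linForm
  rw [map_sum]
  rw [Finset.sum_eq_single i]
  · rw [pderiv_C_mul, pderiv_X_self, mul_one]
  · intro j _ hj
    rw [pderiv_C_mul, pderiv_X_of_ne hj, mul_zero]
  · intro h
    exact absurd (Finset.mem_univ i) h

lemma iter_pderiv_C_mul_pow (a : Fin n → k) (i : Fin n) (c : k) (m q : ℕ) (h : q ≤ m) :
    (fun H : MvPolynomial (Fin n) k => pderiv i H)^[q] (C c * linForm a ^ m)
      = C (c * (m.descFactorial q : k) * a i ^ q) * linForm a ^ (m - q) := by
  induction q with
  | zero => simp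
  | succ q ih =>
    rw [Function.iterate_succ_apply', ih (Nat.le_of_succ_le h), pderiv_C_mul, pderiv_pow,
      pderiv_linForm]
    rw [show m - q - 1 = m - (q + 1) by omega, Nat.descFactorial_succ, Nat.cast_mul]
    rw [show ((m - q : ℕ) : MvPolynomial (Fin n) k) = C ((m - q : ℕ) : k) from
      (MvPolynomial.C_eq_coe_nat _).symm]
    rw [pow_succ]
    simp only [map_mul]
    ring

lemma descFactorial_add_eq (m j q : ℕ) :
    m.descFactorial (j + q) = m.descFactorial j * (m - j).descFactorial q := by
  induction q with
  | zero => simp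
  | succ q ih =>
    rw [show j + (q + 1) = (j + q) + 1 by omega, Nat.descFactorial_succ, ih,
      Nat.descFactorial_succ, show m - (j + q) = m - j - q by omega]
    ring

lemma foldr_iter_pow (a : Fin n → k) (s : Fin n →₀ ℕ) (L : List (Fin n)) (hL : L.Nodup)
    (m : ℕ) (h : ∑ i ∈ L.toFinset, s i ≤ m) (c : k) :
    L.foldr (fun i G => (fun H : MvPolynomial (Fin n) k => pderiv i H)^[s i] G)
        (C c * linForm a ^ m)
      = C (c * (m.descFactorial (∑ i ∈ L.toFinset, s i) : k) * ∏ i ∈ L.toFinset, a i ^ s i)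
          * linForm a ^ (m - ∑ i ∈ L.toFinset, s i) := by
  induction L with
  | nil => simp
  | cons i L ih =>
    obtain ⟨hi, hL'⟩ := List.nodup_cons.mp hL
    have hiT : i ∉ L.toFinset := by simpa using hi
    rw [List.toFinset_cons, Finset.sum_insert hiT, Finset.prod_insert hiT] at *
    have hS : ∑ j ∈ L.toFinset, s j ≤ m := by omega
    rw [List.foldr_cons, ih hL' hS, iter_pderiv_C_mul_pow a i _ _ (s i) (by omega)]
    rw [show m - ∑ j ∈ L.toFinset, s j - s i = m - (s i + ∑ j ∈ L.toFinset, s j) by omega]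
    congr 1
    rw [show s i + ∑ j ∈ L.toFinset, s j = (∑ j ∈ L.toFinset, s j) + s i by omega,
      descFactorial_add_eq, Nat.cast_mul]
    exact congrArg C (by ring)

lemma contract_pow_eq {d : ℕ} (a : Fin n → k) (D : MvPolynomial (Fin n) k)
    (hD : D.IsHomogeneous d) :
    contract D (linForm a ^ d) = C ((d.factorial : k) * eval a D) := by
  unfold contract
  have key : ∀ s ∈ D.support,
      D.coeff s • ((List.finRange n).foldr
        (fun i G => (fun H : MvPolynomial (Fin n) k => pderiv i H)^[s i] G) (linForm a ^ d))
      = C (D.coeff s * ((d.factorial : k) * ∏ i, a i ^ s i)) := by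
    intro s hs
    have hsd : s.degree = d := by
      by_contra h
      exact (MvPolynomial.mem_support_iff.mp hs) (hD.coeff_eq_zero h)
    have hsum : ∑ i, s i = d := by rw [← degree_univ, hsd]
    have h1 : linForm a ^ d = C (1 : k) * linForm a ^ d := by rw [map_one, one_mul]
    rw [h1, foldr_iter_pow a s _ (List.nodup_finRange n) d
        (by rw [List.toFinset_finRange, hsum]) 1]
    rw [List.toFinset_finRange, hsum, Nat.sub_self, pow_zero, mul_one,
      Nat.descFactorial_self, one_mul, smul_eq_C_mul, ← C_mul]
  rw [Finset.sum_congr rfl key, ← map_sum, eval_eq']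
  rw [Finset.mul_sum]
  exact congrArg C (Finset.sum_congr rfl fun s _ => by ring)

lemma exists_dual_ne_zero {V : Type} [AddCommGroup V] [Module k V] {v : V} (hv : v ≠ 0) :
    ∃ g : Module.Dual k V, g v ≠ 0 := by
  by_contra h
  push_neg at h
  exact hv ((Module.forall_dual_apply_eq_zero_iff k v).mp h)

end ApolarityAux


/-- Apolarity lemma: if the intersection of the homogeneous ideals of `r` distinct points
`[l₁], …, [l_r]` of `ℙ(S₁)` is contained in `F^⊥`, then `F` lies in the linear span of
`l₁^d, …, l_r^d`. -/
theorem stmt_10 (k : Type) [Field k] [IsAlgClosed k] [CharZero k]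
    (n d : ℕ) (F : MvPolynomial (Fin n) k) (hF : F.IsHomogeneous d)
    (r : ℕ) (a : Fin r → (Fin n → k)) (ha : ∀ i, a i ≠ 0)
    (hdistinct : ∀ i j, i ≠ j → ∀ c : k, a i ≠ c • a j)
    (hann : ∀ D : MvPolynomial (Fin n) k,
      (∀ i, ∀ e : ℕ, eval (a i) (homogeneousComponent e D) = 0) → contract D F = 0) :
    F ∈ Submodule.span k (Set.range fun i => linForm (a i) ^ d) := by
  classical
  by_contra hFW
  set W := Submodule.span k (Set.range fun i => linForm (a i) ^ d) with hWdef
  have hq : W.mkQ F ≠ 0 := by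
    rw [Submodule.mkQ_apply, ne_eq, Submodule.Quotient.mk_eq_zero]
    exact hFW
  obtain ⟨g, hg⟩ := exists_dual_ne_zero (k := k) hq
  set φ : Module.Dual k (MvPolynomial (Fin n) k) := g ∘ₗ W.mkQ with hφdef
  have hφF : φ F ≠ 0 := hg
  have hφW : ∀ w ∈ W, φ w = 0 := by
    intro w hw
    have hw0 : W.mkQ w = 0 := by
      rw [Submodule.mkQ_apply, Submodule.Quotient.mk_eq_zero]
      exact hw
    rw [hφdef, LinearMap.comp_apply, hw0, map_zero]
  have hlhom : ∀ i, (linForm (a i) ^ d).IsHomogeneous d := by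
    intro i
    have h1 : (linForm (a i)).IsHomogeneous 1 :=
      IsHomogeneous.sum Finset.univ _ 1 fun j _ => isHomogeneous_C_mul_X _ _
    simpa using h1.pow d
  set T : Finset (Fin n →₀ ℕ) :=
    F.support ∪ Finset.univ.biUnion (fun i => (linForm (a i) ^ d).support) with hTdef
  have hT : ∀ s ∈ T, s.degree = d := by
    intro s hs
    rcases Finset.mem_union.mp hs with h | h
    · by_contra hne; exact (MvPolynomial.mem_support_iff.mp h) (hF.coeff_eq_zero hne)
    · obtain ⟨i, _, hi⟩ := Finset.mem_biUnion.mp h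
      by_contra hne; exact (MvPolynomial.mem_support_iff.mp hi) ((hlhom i).coeff_eq_zero hne)
  have hfa : ∀ s : Fin n →₀ ℕ, ((∏ i, (s i).factorial : ℕ) : k) ≠ 0 := fun s =>
    Nat.cast_ne_zero.mpr
      (Finset.prod_ne_zero_iff.mpr fun i _ => (Nat.factorial_pos _).ne')
  set D : MvPolynomial (Fin n) k :=
    ∑ s ∈ T, monomial s (φ (monomial s 1) / ((∏ i, (s i).factorial : ℕ) : k)) with hDdef
  have hcoeffD : ∀ t, D.coeff t =
      if t ∈ T then φ (monomial t 1) / ((∏ i, (t i).factorial : ℕ) : k) else 0 := by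
    intro t
    rw [hDdef, MvPolynomial.coeff_sum]
    simp_rw [coeff_monomial]
    rw [Finset.sum_ite_eq' T t _]
  have hDsupp : D.support ⊆ T := fun t ht => by
    by_contra h
    exact (MvPolynomial.mem_support_iff.mp ht) (by rw [hcoeffD t, if_neg h])
  have hDhom : D.IsHomogeneous d :=
    IsHomogeneous.sum _ _ _ fun s hs => isHomogeneous_monomial _ (hT s hs)
  have hpair : ∀ G : MvPolynomial (Fin n) k, G.support ⊆ T →
      (∑ s ∈ D.support, D.coeff s * (((∏ i, (s i).factorial : ℕ) : k) * G.coeff s))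
        = φ G := by
    intro G hGT
    rw [Finset.sum_subset hDsupp (fun s _ hs => by
      rw [MvPolynomial.notMem_support_iff.mp hs, zero_mul])]
    have step : ∀ s ∈ T, D.coeff s * (((∏ i, (s i).factorial : ℕ) : k) * G.coeff s)
        = φ (monomial s (G.coeff s)) := by
      intro s hs
      rw [hcoeffD s, if_pos hs]
      have hm : monomial s (G.coeff s) = G.coeff s • monomial s (1:k) := by
        rw [smul_monomial, smul_eq_mul, mul_one]
      rw [hm, map_smul, smul_eq_mul]
      rw [div_mul_eq_mul_div, mul_comm (((∏ i, (s i).factorial : ℕ) : k)) (G.coeff s),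
        ← mul_assoc, mul_div_assoc, div_self (hfa s), mul_one, mul_comm]
    rw [Finset.sum_congr rfl step, ← map_sum]
    congr 1
    conv_rhs => rw [G.as_sum]
    exact (Finset.sum_subset hGT (fun s _ hs => by
      rw [MvPolynomial.notMem_support_iff.mp hs, map_zero])).symm
  have hsupl : ∀ i, (linForm (a i) ^ d).support ⊆ T := fun i s hs =>
    Finset.mem_union_right _ (Finset.mem_biUnion.mpr ⟨i, Finset.mem_univ i, hs⟩)
  have hannD : ∀ i, ∀ e : ℕ, eval (a i) (homogeneousComponent e D) = 0 := by
    intro i e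
    rw [homogeneousComponent_of_mem ((mem_homogeneousSubmodule _ _).mpr hDhom)]
    split
    · have h1 := contract_pow_eq (a i) D hDhom
      have h2 := contract_eq_pairing D (linForm (a i) ^ d) hDhom (hlhom i)
      rw [hpair _ (hsupl i)] at h2
      have h4 : φ (linForm (a i) ^ d) = 0 :=
        hφW _ (Submodule.subset_span ⟨i, rfl⟩)
      rw [h4, map_zero] at h2
      have h5 : C ((d.factorial : k) * eval (a i) D) = (C 0 : MvPolynomial (Fin n) k) := by
        rw [← h1, h2, map_zero]
      have h6 : (d.factorial : k) * eval (a i) D = 0 := (C_injective (Fin n) k) h5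
      exact (mul_eq_zero.mp h6).resolve_left (Nat.cast_ne_zero.mpr d.factorial_ne_zero)
    · simp
  have hc := hann D hannD
  rw [contract_eq_pairing D F hDhom hF, hpair F Finset.subset_union_left] at hc
  have : φ F = 0 := (C_injective (Fin n) k) (by rw [hc, map_zero])
  exact hφF this
end

section
/- The classical Waring rank of the ternary cubic x_0 x_1² + x_1 x_2² is exactly 5; in particular, it cannot be written as a sum of fewer than 5 cubes of linear forms, and it is a sum of 5 cubes of linear forms. -/
open MvPolynomial

section Aux
variable {k : Type} [Field k] [CharZero k]

lemma two_term (a₁ a₂ b₁ b₂ : k) (h1 : a₁^3 + a₂^3 = 0)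
    (h2 : a₁^2*b₁ + a₂^2*b₂ = 0) (h3 : a₁*b₁^2 + a₂*b₂^2 = 1/3) : False := by
  have h : a₂^3 = 0 := by
    have h' : a₂^3/3 = 0 := by
      linear_combination (-(a₂^3)) * h3 + (a₂^2*b₂ - a₁^2*b₁) * h2 + a₁*b₁^2 * h1
    linear_combination 3 * h'
  have ha2 : a₂ = 0 := by
    exact pow_eq_zero_iff (by norm_num) |>.mp h
  have ha1 : a₁ = 0 := by
    have : a₁^3 = 0 := by linear_combination h1 - h
    exact pow_eq_zero_iff (by norm_num) |>.mp this
  rw [ha1, ha2] at h3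
  norm_num at h3

lemma one_c (c b : k) (h1 : c^3 = 0) (h2 : b*c^2 = 1/3) : False := by
  have hc : c = 0 := pow_eq_zero_iff (by norm_num) |>.mp h1
  rw [hc] at h2
  norm_num at h2

set_option maxHeartbeats 2000000 in
lemma key4 (a b c : Fin 4 → k)
    (E1 : a 0^3 + a 1^3 + a 2^3 + a 3^3 = 0)
    (E2 : (a 0)^2*b 0 + (a 1)^2*b 1 + (a 2)^2*b 2 + (a 3)^2*b 3 = 0)
    (E3 : (a 0)^2*c 0 + (a 1)^2*c 1 + (a 2)^2*c 2 + (a 3)^2*c 3 = 0)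
    (E4 : a 0*(b 0)^2 + a 1*(b 1)^2 + a 2*(b 2)^2 + a 3*(b 3)^2 = 1/3)
    (E5 : a 0*b 0*c 0 + a 1*b 1*c 1 + a 2*b 2*c 2 + a 3*b 3*c 3 = 0)
    (E6 : a 0*(c 0)^2 + a 1*(c 1)^2 + a 2*(c 2)^2 + a 3*(c 3)^2 = 0)
    (E7 : (b 0)^3 + (b 1)^3 + (b 2)^3 + (b 3)^3 = 0)
    (E8 : (b 0)^2*c 0 + (b 1)^2*c 1 + (b 2)^2*c 2 + (b 3)^2*c 3 = 0)
    (E9 : b 0*(c 0)^2 + b 1*(c 1)^2 + b 2*(c 2)^2 + b 3*(c 3)^2 = 1/3)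
    (E10 : (c 0)^3 + (c 1)^3 + (c 2)^3 + (c 3)^3 = 0) : False := by
  classical
  have expand : ∀ u : Fin 4 → k, (Matrix.of ![a, b, c] : Matrix (Fin 3) (Fin 4) k).mulVecLin u
      = ![∑ i, a i * u i, ∑ i, b i * u i, ∑ i, c i * u i] := by
    intro u; funext j; fin_cases j <;> rfl
  have hsurj : Function.Surjective ((Matrix.of ![a, b, c] : Matrix (Fin 3) (Fin 4) k).mulVecLin) := by
    intro v
    refine ⟨fun i => 3*(v 0)*(b i*b i) + 3*(v 1)*(a i*b i) + 3*(v 2)*(b i*c i), ?_⟩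
    rw [expand]
    funext j
    fin_cases j <;> simp [Fin.sum_univ_four]
    · linear_combination 3*(v 0)*E4 + 3*(v 1)*E2 + 3*(v 2)*E5
    · linear_combination 3*(v 0)*E7 + 3*(v 1)*E4 + 3*(v 2)*E8
    · linear_combination 3*(v 0)*E8 + 3*(v 1)*E5 + 3*(v 2)*E9
  have hker : Module.finrank k (LinearMap.ker ((Matrix.of ![a, b, c] : Matrix (Fin 3) (Fin 4) k).mulVecLin)) = 1 := by
    have h := LinearMap.finrank_range_add_finrank_ker ((Matrix.of ![a, b, c] : Matrix (Fin 3) (Fin 4) k).mulVecLin)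
    rw [LinearMap.range_eq_top.mpr hsurj] at h
    simp only [finrank_top, Module.finrank_pi, Fintype.card_fin] at h
    omega
  have hwmem : (fun i => a i * a i) ∈ LinearMap.ker ((Matrix.of ![a, b, c] : Matrix (Fin 3) (Fin 4) k).mulVecLin) := by
    rw [LinearMap.mem_ker, expand]
    funext j
    fin_cases j <;> simp [Fin.sum_univ_four]
    · linear_combination E1
    · linear_combination E2
    · linear_combination E3
  have hvmem : (fun i => a i * c i) ∈ LinearMap.ker ((Matrix.of ![a, b, c] : Matrix (Fin 3) (Fin 4) k).mulVecLin) := by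
    rw [LinearMap.mem_ker, expand]
    funext j
    fin_cases j <;> simp [Fin.sum_univ_four]
    · linear_combination E3
    · linear_combination E5
    · linear_combination E6
  have hw0 : (fun i => a i * a i) ≠ (0 : Fin 4 → k) := by
    intro h
    have ha : ∀ i, a i = 0 := by
      intro i
      have := congrFun h i
      simpa [mul_self_eq_zero] using this
    have : (1:k)/3 = 0 := by
      linear_combination -E4 + (b 0)^2*(ha 0) + (b 1)^2*(ha 1) + (b 2)^2*(ha 2) + (b 3)^2*(ha 3)
    norm_num at this
  have hspan : Submodule.span k {(fun i => a i * a i : Fin 4 → k)} = LinearMap.ker ((Matrix.of ![a, b, c] : Matrix (Fin 3) (Fin 4) k).mulVecLin) := by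
    apply Submodule.eq_of_le_of_finrank_le
    · rw [Submodule.span_le, Set.singleton_subset_iff]; exact hwmem
    · rw [hker, finrank_span_singleton hw0]
  have hv : (fun i => a i * c i : Fin 4 → k) ∈
      Submodule.span k {(fun i => a i * a i : Fin 4 → k)} := by
    rw [hspan]; exact hvmem
  rw [Submodule.mem_span_singleton] at hv
  obtain ⟨μ, hμ⟩ := hv
  have hac : ∀ i, a i * (c i - μ * a i) = 0 := by
    intro i
    have := congrFun hμ i
    simp only [Pi.smul_apply, smul_eq_mul] at this
    linear_combination -this
  have F1 : (c 0 - μ*a 0)^3 + (c 1 - μ*a 1)^3 + (c 2 - μ*a 2)^3 + (c 3 - μ*a 3)^3 = 0 := by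
    linear_combination E10 - 3*μ*E6 + 3*μ^2*E3 - μ^3*E1
  have F2 : b 0*(c 0 - μ*a 0)^2 + b 1*(c 1 - μ*a 1)^2 + b 2*(c 2 - μ*a 2)^2
      + b 3*(c 3 - μ*a 3)^2 = 1/3 := by
    linear_combination E9 - 2*μ*E5 + μ^2*E2
  rcases mul_eq_zero.mp (hac 0) with h0|h0 <;>
  rcases mul_eq_zero.mp (hac 1) with h1|h1 <;>
  rcases mul_eq_zero.mp (hac 2) with h2|h2 <;>
  rcases mul_eq_zero.mp (hac 3) with h3|h3 <;>
  first
  | exact two_term (a 2) (a 3) (b 2) (b 3)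
      (by linear_combination E1 - (a 0)^2*h0 - (a 1)^2*h1)
      (by linear_combination E2 - (a 0)*(b 0)*h0 - (a 1)*(b 1)*h1)
      (by linear_combination E4 - (b 0)^2*h0 - (b 1)^2*h1)
  | exact two_term (a 1) (a 3) (b 1) (b 3)
      (by linear_combination E1 - (a 0)^2*h0 - (a 2)^2*h2)
      (by linear_combination E2 - (a 0)*(b 0)*h0 - (a 2)*(b 2)*h2)
      (by linear_combination E4 - (b 0)^2*h0 - (b 2)^2*h2)
  | exact two_term (a 1) (a 2) (b 1) (b 2)
      (by linear_combination E1 - (a 0)^2*h0 - (a 3)^2*h3)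
      (by linear_combination E2 - (a 0)*(b 0)*h0 - (a 3)*(b 3)*h3)
      (by linear_combination E4 - (b 0)^2*h0 - (b 3)^2*h3)
  | exact two_term (a 0) (a 3) (b 0) (b 3)
      (by linear_combination E1 - (a 1)^2*h1 - (a 2)^2*h2)
      (by linear_combination E2 - (a 1)*(b 1)*h1 - (a 2)*(b 2)*h2)
      (by linear_combination E4 - (b 1)^2*h1 - (b 2)^2*h2)
  | exact two_term (a 0) (a 2) (b 0) (b 2)
      (by linear_combination E1 - (a 1)^2*h1 - (a 3)^2*h3)
      (by linear_combination E2 - (a 1)*(b 1)*h1 - (a 3)*(b 3)*h3)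
      (by linear_combination E4 - (b 1)^2*h1 - (b 3)^2*h3)
  | exact two_term (a 0) (a 1) (b 0) (b 1)
      (by linear_combination E1 - (a 2)^2*h2 - (a 3)^2*h3)
      (by linear_combination E2 - (a 2)*(b 2)*h2 - (a 3)*(b 3)*h3)
      (by linear_combination E4 - (b 2)^2*h2 - (b 3)^2*h3)
  | exact one_c (c 0 - μ*a 0) (b 0)
      (by linear_combination F1 - (c 1 - μ*a 1)^2*h1 - (c 2 - μ*a 2)^2*h2 - (c 3 - μ*a 3)^2*h3)
      (by linear_combination F2 - (b 1)*(c 1 - μ*a 1)*h1 - (b 2)*(c 2 - μ*a 2)*h2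
            - (b 3)*(c 3 - μ*a 3)*h3)
  | exact one_c (c 1 - μ*a 1) (b 1)
      (by linear_combination F1 - (c 0 - μ*a 0)^2*h0 - (c 2 - μ*a 2)^2*h2 - (c 3 - μ*a 3)^2*h3)
      (by linear_combination F2 - (b 0)*(c 0 - μ*a 0)*h0 - (b 2)*(c 2 - μ*a 2)*h2
            - (b 3)*(c 3 - μ*a 3)*h3)
  | exact one_c (c 2 - μ*a 2) (b 2)
      (by linear_combination F1 - (c 0 - μ*a 0)^2*h0 - (c 1 - μ*a 1)^2*h1 - (c 3 - μ*a 3)^2*h3)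
      (by linear_combination F2 - (b 0)*(c 0 - μ*a 0)*h0 - (b 1)*(c 1 - μ*a 1)*h1
            - (b 3)*(c 3 - μ*a 3)*h3)
  | exact one_c (c 3 - μ*a 3) (b 3)
      (by linear_combination F1 - (c 0 - μ*a 0)^2*h0 - (c 1 - μ*a 1)^2*h1 - (c 2 - μ*a 2)^2*h2)
      (by linear_combination F2 - (b 0)*(c 0 - μ*a 0)*h0 - (b 1)*(c 1 - μ*a 1)*h1
            - (b 2)*(c 2 - μ*a 2)*h2)

end Aux

set_option maxHeartbeats 2000000 in
/-- The classical Waring rank of the ternary cubic `x₀x₁² + x₁x₂²` is exactly `5`. -/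
theorem stmt_17 (k : Type) [Field k] [IsAlgClosed k] [CharZero k] :
    IsLeast {m : ℕ | ∃ l : Fin m → (Fin 3 → k),
      (X 0 * X 1 ^ 2 + X 1 * X 2 ^ 2 : MvPolynomial (Fin 3) k)
        = ∑ i, linForm (l i) ^ 3} 5 := by
  constructor
  · -- membership : an explicit 5-term decomposition
    obtain ⟨i, hi⟩ := IsAlgClosed.exists_pow_nat_eq (-1 : k) (n := 2) (by norm_num)
    obtain ⟨r, hr⟩ := IsAlgClosed.exists_pow_nat_eq (-(1/3) : k) (n := 3) (by norm_num)
    obtain ⟨s, hs⟩ := IsAlgClosed.exists_pow_nat_eq ((1/12) : k) (n := 3) (by norm_num)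
    refine ⟨![![r,0,0], ![s,s,s], ![s,s,-s], ![s,-s,s*i], ![s,-s,-(s*i)]], ?_⟩
    have hA : (C r : MvPolynomial (Fin 3) k)^3 + 4*(C s)^3 = 0 := by
      rw [← C_pow, ← C_pow, hr, hs,
        (map_ofNat (C : k →+* MvPolynomial (Fin 3) k) 4).symm, ← C_mul, ← C_add]
      norm_num
    have hB : 12*(C s : MvPolynomial (Fin 3) k)^3 = 1 := by
      rw [← C_pow, hs, (map_ofNat (C : k →+* MvPolynomial (Fin 3) k) 12).symm, ← C_mul]
      norm_num
    have hI : (C i : MvPolynomial (Fin 3) k)^2 = -1 := by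
      rw [← C_pow, hi]
      simp
    simp only [linForm, Fin.sum_univ_five, Fin.sum_univ_three, Matrix.cons_val_zero,
      Matrix.cons_val_one, Matrix.head_cons, Matrix.cons_val_two, Matrix.tail_cons,
      Matrix.cons_val_three, Matrix.cons_val_four, Matrix.head_fin_const,
      map_zero, map_neg, map_mul]
    linear_combination (-(X 0 : MvPolynomial (Fin 3) k)^3) * hA
      - ((X 0 : MvPolynomial (Fin 3) k) * X 1^2 + X 1 * X 2^2) * hB
      - (6*(C s : MvPolynomial (Fin 3) k)^3*(X 2)^2*(X 0 - X 1)) * hI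
  · -- lower bound
    rintro m ⟨l, hl⟩
    by_contra hcon
    push_neg at hcon
    have hm4 : m ≤ 4 := by omega
    obtain ⟨l', hl'⟩ : ∃ l' : Fin 4 → Fin 3 → k,
        (X 0 * X 1 ^ 2 + X 1 * X 2 ^ 2 : MvPolynomial (Fin 3) k)
          = ∑ j : Fin 4, linForm (l' j) ^ 3 := by
      refine ⟨fun j => if h : (j:ℕ) < m then l ⟨j, h⟩ else 0, ?_⟩
      rw [hl]
      have e1 : ∑ i : Fin m, linForm (l i) ^ 3
          = ∑ j ∈ Finset.range m,
            (if h : j < m then linForm (l ⟨j, h⟩) ^ 3 else 0) := by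
        rw [← Fin.sum_univ_eq_sum_range
          (fun j => if h : j < m then linForm (l ⟨j, h⟩) ^ 3 else 0) m]
        apply Finset.sum_congr rfl
        intro j _
        simp [j.isLt]
      have e2 : ∑ j ∈ Finset.range m,
            (if h : j < m then linForm (l ⟨j, h⟩) ^ 3 else 0)
          = ∑ j ∈ Finset.range 4,
            (if h : j < m then linForm (l ⟨j, h⟩) ^ 3 else 0) := by
        apply Finset.sum_subset (Finset.range_subset_range.mpr hm4)
        intro x _ hx
        rw [dif_neg]
        simpa using hx
      have e3 : ∑ j ∈ Finset.range 4,
            (if h : j < m then linForm (l ⟨j, h⟩) ^ 3 else 0)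
          = ∑ j : Fin 4, linForm
              ((fun j : Fin 4 => if h : (j:ℕ) < m then l ⟨j, h⟩ else 0) j) ^ 3 := by
        rw [← Fin.sum_univ_eq_sum_range
          (fun j => if h : j < m then linForm (l ⟨j, h⟩) ^ 3 else 0) 4]
        apply Finset.sum_congr rfl
        intro j _
        by_cases h : (j:ℕ) < m
        · simp [h]
        · simp [h, linForm]
      rw [e1, e2, e3]
    have EV : ∀ v : Fin 3 → k,
        ∑ j : Fin 4, (l' j 0 * v 0 + l' j 1 * v 1 + l' j 2 * v 2)^3
          = v 0 * v 1^2 + v 1 * v 2^2 := by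
      intro v
      have h := congrArg (eval v) hl'
      simp only [map_add, map_mul, map_pow, eval_X, map_sum, linForm,
        Fin.sum_univ_three, eval_C] at h
      exact h.symm
    have G1 := EV ![1,0,0]
    have G2 := EV ![0,1,0]
    have G3 := EV ![0,0,1]
    have G4 := EV ![1,1,0]
    have G5 := EV ![1,-1,0]
    have G6 := EV ![0,1,1]
    have G7 := EV ![0,1,-1]
    have G8 := EV ![1,0,1]
    have G9 := EV ![1,0,-1]
    have G10 := EV ![1,1,1]
    simp only [Fin.sum_univ_four, Matrix.cons_val_zero, Matrix.cons_val_one,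
      Matrix.head_cons, Matrix.cons_val_two, Matrix.tail_cons]
      at G1 G2 G3 G4 G5 G6 G7 G8 G9 G10
    have E1h : l' 0 0^3 + l' 1 0^3 + l' 2 0^3 + l' 3 0^3 = 0 := by
      linear_combination G1
    have E7h : l' 0 1^3 + l' 1 1^3 + l' 2 1^3 + l' 3 1^3 = 0 := by
      linear_combination G2
    have E10h : l' 0 2^3 + l' 1 2^3 + l' 2 2^3 + l' 3 2^3 = 0 := by
      linear_combination G3
    have E2h : (l' 0 0)^2*l' 0 1 + (l' 1 0)^2*l' 1 1 + (l' 2 0)^2*l' 2 1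
        + (l' 3 0)^2*l' 3 1 = 0 := by
      linear_combination (1/6)*G4 - (1/6)*G5 - (1/3)*G2
    have E4h : l' 0 0*(l' 0 1)^2 + l' 1 0*(l' 1 1)^2 + l' 2 0*(l' 2 1)^2
        + l' 3 0*(l' 3 1)^2 = 1/3 := by
      linear_combination (1/6)*G4 + (1/6)*G5 - (1/3)*G1
    have E9h : l' 0 1*(l' 0 2)^2 + l' 1 1*(l' 1 2)^2 + l' 2 1*(l' 2 2)^2
        + l' 3 1*(l' 3 2)^2 = 1/3 := by
      linear_combination (1/6)*G6 + (1/6)*G7 - (1/3)*G2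
    have E8h : (l' 0 1)^2*l' 0 2 + (l' 1 1)^2*l' 1 2 + (l' 2 1)^2*l' 2 2
        + (l' 3 1)^2*l' 3 2 = 0 := by
      linear_combination (1/6)*G6 - (1/6)*G7 - (1/3)*G3
    have E6h : l' 0 0*(l' 0 2)^2 + l' 1 0*(l' 1 2)^2 + l' 2 0*(l' 2 2)^2
        + l' 3 0*(l' 3 2)^2 = 0 := by
      linear_combination (1/6)*G8 + (1/6)*G9 - (1/3)*G1
    have E3h : (l' 0 0)^2*l' 0 2 + (l' 1 0)^2*l' 1 2 + (l' 2 0)^2*l' 2 2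
        + (l' 3 0)^2*l' 3 2 = 0 := by
      linear_combination (1/6)*G8 - (1/6)*G9 - (1/3)*G3
    have E5h : l' 0 0*l' 0 1*l' 0 2 + l' 1 0*l' 1 1*l' 1 2 + l' 2 0*l' 2 1*l' 2 2
        + l' 3 0*l' 3 1*l' 3 2 = 0 := by
      linear_combination (1/6)*G10 - (1/6)*G1 - (1/6)*G2 - (1/6)*G3
        - (1/2)*E2h - (1/2)*E4h - (1/2)*E3h - (1/2)*E6h - (1/2)*E8h - (1/2)*E9h
    exact key4 (fun j => l' j 0) (fun j => l' j 1) (fun j => l' j 2)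
      E1h E2h E3h E4h E5h E6h E7h E8h E9h E10h
end
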